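/- arXiv:2111.05086 — 9 statements merged into one kernel-verified Lean document; each statement's English description precedes it below -/
import Mathlib

section
/- For all positive integers m, the sum of gcd(a-1, m) over all integers a with 1 ≤ a ≤ m and gcd(a, m) = 1 equals d(m)·φ(m), where d(m) is the number of positive divisors of m and φ is Euler's totient function. (Menon's identity.) -/
open Finset

lemma ker_card (m d : ℕ) (hm : 2 ≤ m) (hd : d ∣ m) :
    Nat.totient d * ((Finset.range m).filter
      (fun a => Nat.gcd a m = 1 ∧ (a : ZMod d) = 1)).card = Nat.totient m := by
  have hm0 : NeZero m := ⟨by omega⟩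
  have hd0 : d ≠ 0 := by rintro rfl; exact absurd (Nat.eq_zero_of_zero_dvd hd) (by omega)
  have : NeZero d := ⟨hd0⟩
  set f := ZMod.unitsMap hd with hf
  have hsurj : Function.Surjective f := ZMod.unitsMap_surjective hd
  -- equivalence between the filtered set and the kernel
  have hkey : ∀ u : (ZMod m)ˣ, (f u : ZMod d) = (((u : ZMod m).val : ZMod d)) := by
    intro u
    simp [hf, ZMod.unitsMap_def, ZMod.natCast_val]
  have hker : ∀ u : (ZMod m)ˣ, u ∈ f.ker ↔ (((u : ZMod m).val : ZMod d) = 1) := by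
    intro u
    simp only [MonoidHom.mem_ker, Units.ext_iff, Units.val_one, hkey u]
  have hcard : ((Finset.range m).filter
      (fun a => Nat.gcd a m = 1 ∧ (a : ZMod d) = 1)).card = Nat.card f.ker := by
    rw [Nat.card_eq_fintype_card, ← Fintype.card_coe]
    apply Fintype.card_congr
    refine
      { toFun := fun x => ⟨ZMod.unitOfCoprime x.1 (by
          have := (Finset.mem_filter.mp x.2).2.1
          exact this), ?_⟩
        invFun := fun u => ⟨(u.1 : ZMod m).val, ?_⟩
        left_inv := ?_
        right_inv := ?_ }
    · rw [hker]
      have h2 := (Finset.mem_filter.mp x.2).2.2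
      have h1 := Finset.mem_range.mp (Finset.mem_filter.mp x.2).1
      simp [ZMod.coe_unitOfCoprime, ZMod.val_natCast_of_lt h1, h2]
    · simp only [Finset.mem_filter, Finset.mem_range]
      refine ⟨ZMod.val_lt _, ZMod.val_coe_unit_coprime u.1, ?_⟩
      have := (hker u.1).mp u.2
      simpa using this
    · rintro ⟨x, hx⟩
      have h1 := Finset.mem_range.mp (Finset.mem_filter.mp hx).1
      simp [ZMod.val_natCast_of_lt h1]
    · rintro ⟨u, hu⟩
      ext
      simp [ZMod.natCast_val, ZMod.cast_id]
  rw [hcard]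
  have h1 : Nat.card (ZMod m)ˣ = Nat.card ((ZMod m)ˣ ⧸ f.ker) * Nat.card f.ker :=
    Subgroup.card_eq_card_quotient_mul_card_subgroup f.ker
  have h2 : Nat.card ((ZMod m)ˣ ⧸ f.ker) = Nat.card (ZMod d)ˣ :=
    Nat.card_congr (QuotientGroup.quotientKerEquivOfSurjective f hsurj).toEquiv
  have h3 : Nat.card (ZMod m)ˣ = Nat.totient m := by
    rw [Nat.card_eq_fintype_card, ZMod.card_units_eq_totient]
  have h4 : Nat.card (ZMod d)ˣ = Nat.totient d := by
    rw [Nat.card_eq_fintype_card, ZMod.card_units_eq_totient]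
  rw [← h3, h1, h2, h4]

/-- **Menon's identity.** For all positive integers `m`, the sum of `gcd(a-1, m)` over
all integers `a` with `1 ≤ a ≤ m` and `gcd(a, m) = 1` equals `d(m)·φ(m)`. -/
theorem menon_identity (m : ℕ) (hm : 0 < m) :
    ∑ a ∈ (Finset.Icc 1 m).filter (fun a => Nat.gcd a m = 1),
      Int.gcd ((a : ℤ) - 1) (m : ℤ) = m.divisors.card * Nat.totient m := by
  rcases eq_or_lt_of_le (show 1 ≤ m from hm) with h1 | hm2
  · simp [← h1]
  -- m ≥ 2
  have hm2' : 2 ≤ m := hm2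
  -- rewrite Int.gcd as Nat.gcd
  have key : ∀ a ∈ (Finset.Icc 1 m).filter (fun a => Nat.gcd a m = 1),
      Int.gcd ((a : ℤ) - 1) (m : ℤ) = Nat.gcd (a - 1) m := by
    intro a ha
    have h1 : 1 ≤ a := (Finset.mem_Icc.mp (Finset.mem_filter.mp ha).1).1
    have : (a : ℤ) - 1 = ((a - 1 : ℕ) : ℤ) := by push_cast [h1]; ring
    rw [this]
    exact Int.gcd_natCast_natCast _ _
  rw [Finset.sum_congr rfl key]
  -- switch index set to range m
  have hset : (Finset.Icc 1 m).filter (fun a => Nat.gcd a m = 1)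
      = (Finset.range m).filter (fun a => Nat.gcd a m = 1) := by
    ext a
    simp only [Finset.mem_filter, Finset.mem_Icc, Finset.mem_range]
    constructor
    · rintro ⟨⟨h1, h2⟩, h3⟩
      refine ⟨lt_of_le_of_ne h2 ?_, h3⟩
      rintro rfl
      rw [Nat.gcd_self] at h3; omega
    · rintro ⟨h1, h2⟩
      refine ⟨⟨?_, le_of_lt h1⟩, h2⟩
      rcases Nat.eq_zero_or_pos a with rfl | h
      · rw [Nat.gcd_zero_left] at h2; omega
      · exact h
  rw [hset]
  -- gcd as sum of totients over common divisors
  have hgcd : ∀ a ∈ (Finset.range m).filter (fun a => Nat.gcd a m = 1),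
      Nat.gcd (a - 1) m = ∑ e ∈ m.divisors.filter (· ∣ a - 1), Nat.totient e := by
    intro a ha
    have : m.divisors.filter (· ∣ a - 1) = (Nat.gcd (a - 1) m).divisors := by
      ext e
      simp only [Finset.mem_filter, Nat.mem_divisors, Nat.dvd_gcd_iff]
      constructor
      · rintro ⟨⟨h1, h2⟩, h3⟩
        exact ⟨⟨h3, h1⟩, fun h => h2 (Nat.eq_zero_of_gcd_eq_zero_right h)⟩
      · rintro ⟨⟨h1, h2⟩, h3⟩
        exact ⟨⟨h2, by omega⟩, h1⟩
    rw [this, Nat.sum_totient]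
  rw [Finset.sum_congr rfl hgcd]
  -- swap sums
  rw [Finset.sum_comm' (t' := m.divisors)
    (s' := fun e => (Finset.range m).filter (fun a => Nat.gcd a m = 1 ∧ e ∣ a - 1)) ?_]
  · rw [Finset.card_eq_sum_ones m.divisors, Finset.sum_mul, one_mul]
    apply Finset.sum_congr rfl
    intro e he
    have hed : e ∣ m := (Nat.mem_divisors.mp he).1
    rw [Finset.sum_const, smul_eq_mul, mul_comm]
    -- relate divisibility condition to ZMod condition
    have : (Finset.range m).filter (fun a => Nat.gcd a m = 1 ∧ e ∣ a - 1)
        = (Finset.range m).filter (fun a => Nat.gcd a m = 1 ∧ (a : ZMod e) = 1) := by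
      apply Finset.filter_congr
      intro a ha
      simp only [Finset.mem_range] at ha
      constructor
      · rintro ⟨h1, h2⟩
        refine ⟨h1, ?_⟩
        have ha1 : 1 ≤ a := by
          rcases Nat.eq_zero_or_pos a with rfl | h
          · rw [Nat.gcd_zero_left] at h1; omega
          · exact h
        have : a ≡ 1 [MOD e] := ((Nat.modEq_iff_dvd' ha1).mpr h2).symm
        have := (ZMod.natCast_eq_natCast_iff a 1 e).mpr this
        simpa using this
      · rintro ⟨h1, h2⟩
        refine ⟨h1, ?_⟩
        have ha1 : 1 ≤ a := by
          rcases Nat.eq_zero_or_pos a with rfl | h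
          · rw [Nat.gcd_zero_left] at h1; omega
          · exact h
        have : (a : ZMod e) = ((1 : ℕ) : ZMod e) := by simpa using h2
        have := (ZMod.natCast_eq_natCast_iff a 1 e).mp this
        exact (Nat.modEq_iff_dvd' ha1).mp this.symm
    rw [this]
    exact ker_card m e hm2' hed
  · intro a e
    simp only [Finset.mem_filter]
    tauto
end

section
/- For every integer s and every positive integer m, the sum of gcd(a-s, m) over all integers a with 1 ≤ a ≤ m and gcd(a, m) = 1 equals d_s(m)·φ(m), where d_s(m) is the s-free divisor function and φ is Euler's totient function. -/
/-- The `s`-free divisor function `d_s(m)`: the number of positive divisors `d` of `m`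
with `gcd(d, s) = 1`. -/
def sFreeDivisorCount (s : ℤ) (m : ℕ) : ℕ :=
  (m.divisors.filter fun d : ℕ => Int.gcd (d : ℤ) s = 1).card

section aux

open Finset

/-- Fibers of a surjective hom between finite groups all have size `|G| / |H|`. -/
lemma fiber_card_mul {G H : Type*} [Group G] [Group H] [Fintype G] [Fintype H]
    [DecidableEq H] (f : G →* H) (hf : Function.Surjective f) (h : H) :
    (Finset.univ.filter fun g => f g = h).card * Fintype.card H = Fintype.card G := by
  have key : ∀ y : H, (Finset.univ.filter fun g => f g = y).card
      = (Finset.univ.filter fun g => f g = h).card := by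
    intro y
    obtain ⟨g0, hg0⟩ := hf (y⁻¹ * h)
    apply Finset.card_bij (fun g _ => g * g0)
    · intro a ha
      simp only [mem_filter, mem_univ, true_and] at ha ⊢
      rw [map_mul, ha, hg0, mul_inv_cancel_left]
    · intro a _ b _ hab
      exact mul_right_cancel hab
    · intro b hb
      simp only [mem_filter, mem_univ, true_and] at hb
      refine ⟨b * g0⁻¹, ?_, by group⟩
      simp only [mem_filter, mem_univ, true_and, map_mul, map_inv, hb, hg0]
      group
  have := Finset.card_eq_sum_card_fiberwise
    (f := f) (s := Finset.univ) (t := Finset.univ) (fun x _ => Finset.mem_univ _)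
  rw [Finset.sum_congr rfl (fun y _ => key y), Finset.sum_const, smul_eq_mul] at this
  rw [mul_comm, ← Finset.card_univ (α := H), ← this, Finset.card_univ]

lemma isUnit_intCast_iff (d : ℕ) (s : ℤ) :
    IsUnit ((s : ZMod d)) ↔ Int.gcd (d : ℤ) s = 1 := by
  have h1 : IsUnit ((s : ZMod d)) ↔ IsUnit ((s.natAbs : ZMod d)) := by
    rcases Int.natAbs_eq s with h | h
    · conv_lhs => rw [h, Int.cast_natCast]
    · conv_lhs => rw [h, Int.cast_neg, Int.cast_natCast]
      exact IsUnit.neg_iff _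
  rw [h1, ZMod.isUnit_iff_coprime]
  show _ ↔ (d : ℤ).natAbs.gcd s.natAbs = 1
  rw [Int.natAbs_natCast]
  exact Nat.coprime_comm

/-- gcd is invariant under shifts by multiples of the modulus. -/
lemma gcd_congr_mod (n x y : ℤ) (h : n ∣ x - y) : Int.gcd x n = Int.gcd y n := by
  obtain ⟨t, ht⟩ := h
  have hx : x = y + n * t := by linarith
  have hy : y = x + n * (-t) := by linarith
  apply Nat.dvd_antisymm
  · rw [← Int.natCast_dvd_natCast]
    refine Int.dvd_coe_gcd ?_ (Int.gcd_dvd_right _ _)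
    rw [hy]
    exact dvd_add (Int.gcd_dvd_left _ _) ((Int.gcd_dvd_right _ _).mul_right _)
  · rw [← Int.natCast_dvd_natCast]
    refine Int.dvd_coe_gcd ?_ (Int.gcd_dvd_right _ _)
    rw [hx]
    exact dvd_add (Int.gcd_dvd_left _ _) ((Int.gcd_dvd_right _ _).mul_right _)


open Finset in
lemma menon_count (m : ℕ) [NeZero m] (d : ℕ) (hd : d ∣ m) (s : ℤ) :
    (Finset.univ.filter fun u : (ZMod m)ˣ =>
        (d : ℤ) ∣ ((((u : ZMod m).val : ℤ)) - s)).card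
      = if Int.gcd (d : ℤ) s = 1 then m.totient / d.totient else 0 := by
  haveI : NeZero d := ⟨fun h0 => NeZero.ne m (Nat.eq_zero_of_zero_dvd (h0 ▸ hd))⟩
  have hcoe : ∀ u : (ZMod m)ˣ, (ZMod.unitsMap hd u : ZMod d) = ZMod.cast (u : ZMod m) := by
    intro u
    rw [ZMod.unitsMap_def, Units.coe_map]
    exact ZMod.castHom_apply (m := d) (R := ZMod d) (h := hd) (u : ZMod m)
  have hcond : ∀ u : (ZMod m)ˣ, ((d : ℤ) ∣ ((((u : ZMod m).val : ℤ)) - s)) ↔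
      (ZMod.unitsMap hd u : ZMod d) = (s : ZMod d) := by
    intro u
    rw [← ZMod.intCast_zmod_eq_zero_iff_dvd, Int.cast_sub, sub_eq_zero, Int.cast_natCast,
      ZMod.natCast_val, hcoe u]
  by_cases hs : Int.gcd (d : ℤ) s = 1
  · rw [if_pos hs]
    have hu : IsUnit ((s : ZMod d)) := (isUnit_intCast_iff d s).mpr hs
    have hfe : (Finset.univ.filter fun u : (ZMod m)ˣ =>
          (d : ℤ) ∣ ((((u : ZMod m).val : ℤ)) - s))
        = Finset.univ.filter fun u : (ZMod m)ˣ => ZMod.unitsMap hd u = hu.unit := by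
      refine Finset.filter_congr fun u _ => ?_
      rw [hcond u]
      exact ⟨fun h => Units.ext (by rw [hu.unit_spec]; exact h),
        fun h => by rw [h, hu.unit_spec]⟩
    have hcard := fiber_card_mul (ZMod.unitsMap hd) (ZMod.unitsMap_surjective hd) hu.unit
    rw [ZMod.card_units_eq_totient, ZMod.card_units_eq_totient] at hcard
    rw [hfe, ← hcard, Nat.mul_div_cancel _ (Nat.totient_pos.mpr (Nat.pos_of_ne_zero (NeZero.ne d)))]
  · rw [if_neg hs]
    rw [Finset.card_eq_zero, Finset.filter_eq_empty_iff]
    intro u _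
    rw [hcond u]
    intro h
    exact hs ((isUnit_intCast_iff d s).mp (h ▸ (ZMod.unitsMap hd u).isUnit))

open Finset in
lemma gcd_eq_sum_totient (m : ℕ) (hm : m ≠ 0) (x : ℤ) :
    (Int.gcd x m : ℕ) = ∑ d ∈ m.divisors, if (d : ℤ) ∣ x then d.totient else 0 := by
  rw [← Finset.sum_filter]
  have hset : m.divisors.filter (fun d : ℕ => (d : ℤ) ∣ x) = (Int.gcd x m).divisors := by
    ext e
    simp only [Finset.mem_filter, Nat.mem_divisors]
    constructor
    · rintro ⟨⟨hem, -⟩, hex⟩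
      refine ⟨?_, fun h0 => hm (by exact_mod_cast (Int.gcd_eq_zero_iff.mp h0).2)⟩
      rw [← Int.natCast_dvd_natCast]
      exact Int.dvd_coe_gcd hex (Int.natCast_dvd_natCast.mpr hem)
    · rintro ⟨heg, hg0⟩
      have h1 : (e : ℤ) ∣ ↑(Int.gcd x m) := Int.natCast_dvd_natCast.mpr heg
      refine ⟨⟨?_, hm⟩, h1.trans (Int.gcd_dvd_left _ _)⟩
      rw [← Int.natCast_dvd_natCast]
      exact h1.trans (Int.gcd_dvd_right _ _)
  rw [hset, Nat.sum_totient]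

end aux

/-- For every integer `s` and every positive integer `m`, the sum of `gcd(a-s, m)` over
all integers `a` with `1 ≤ a ≤ m` and `gcd(a, m) = 1` equals `d_s(m)·φ(m)`. -/
theorem menon_identity_shift (s : ℤ) (m : ℕ) (hm : 0 < m) :
    ∑ a ∈ (Finset.Icc 1 m).filter (fun a => Nat.gcd a m = 1),
      Int.gcd ((a : ℤ) - s) (m : ℤ) = sFreeDivisorCount s m * Nat.totient m := by
  classical
  haveI : NeZero m := ⟨hm.ne'⟩
  have stepA : ∑ a ∈ (Finset.Icc 1 m).filter (fun a => Nat.gcd a m = 1),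
      Int.gcd ((a : ℤ) - s) (m : ℤ)
      = ∑ u : (ZMod m)ˣ, Int.gcd ((((u : ZMod m).val : ℤ)) - s) (m : ℤ) := by
    refine Finset.sum_bij' (fun a ha => ZMod.unitOfCoprime a
        (Finset.mem_filter.mp ha).2)
      (fun u _ => if (u : ZMod m).val = 0 then m else (u : ZMod m).val)
      (fun a ha => Finset.mem_univ _) ?_ ?_ ?_ ?_
    · intro u _
      rcases eq_or_ne (u : ZMod m).val 0 with h0 | h0
      · have hc := ZMod.val_coe_unit_coprime u
        rw [h0] at hc
        have hm1 : m = 1 := by simpa [Nat.Coprime] using hc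
        simp [h0, hm1]
      · simp only [if_neg h0]
        refine Finset.mem_filter.mpr ⟨Finset.mem_Icc.mpr
          ⟨Nat.one_le_iff_ne_zero.mpr h0, ((u : ZMod m).val_lt).le⟩,
          ZMod.val_coe_unit_coprime u⟩
    · intro a ha
      obtain ⟨haI, hac⟩ := Finset.mem_filter.mp ha
      obtain ⟨ha1, ham⟩ := Finset.mem_Icc.mp haI
      have hval : (ZMod.unitOfCoprime a hac : ZMod m).val = a % m := by
        rw [ZMod.coe_unitOfCoprime, ZMod.val_natCast]
      rcases eq_or_ne (a % m) 0 with h0 | h0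
      · have hdvd : m ∣ a := Nat.dvd_of_mod_eq_zero h0
        have : a = m := Nat.le_antisymm ham (Nat.le_of_dvd (by omega) hdvd)
        simp [hval, h0, this]
      · have hlt : a < m := by
          rcases lt_or_eq_of_le ham with h | h
          · exact h
          · exact absurd (by simp [h]) h0
        simp only [hval, Nat.mod_eq_of_lt hlt]
        rw [if_neg (by omega)]
    · intro u _
      refine Units.ext ?_
      rw [ZMod.coe_unitOfCoprime]
      rcases eq_or_ne (u : ZMod m).val 0 with h0 | h0
      · have hc := ZMod.val_coe_unit_coprime u
        rw [h0] at hc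
        have hm1 : m = 1 := by simpa [Nat.Coprime] using hc
        subst hm1
        exact Subsingleton.elim _ _
      · simp only [if_neg h0]
        rw [ZMod.natCast_val, ZMod.cast_id]
    · intro a ha
      have hval : (ZMod.unitOfCoprime a (Finset.mem_filter.mp ha).2 : ZMod m).val = a % m := by
        rw [ZMod.coe_unitOfCoprime, ZMod.val_natCast]
      rw [hval]
      refine gcd_congr_mod (m : ℤ) _ _ ?_
      have hmod : (m : ℤ) ∣ ((a : ℤ) - ((a % m : ℕ) : ℤ)) := by
        push_cast
        exact Int.dvd_self_sub_of_emod_eq rfl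
      calc (m : ℤ) ∣ ((a : ℤ) - ((a % m : ℕ) : ℤ)) := hmod
        _ = ((a : ℤ) - s) - (((a % m : ℕ) : ℤ) - s) := by ring
  rw [stepA]
  have stepB : ∀ u : (ZMod m)ˣ, (Int.gcd ((((u : ZMod m).val : ℤ)) - s) (m : ℤ) : ℕ)
      = ∑ d ∈ m.divisors, if (d : ℤ) ∣ ((((u : ZMod m).val : ℤ)) - s) then d.totient else 0 :=
    fun u => gcd_eq_sum_totient m hm.ne' _
  rw [Finset.sum_congr rfl fun u _ => stepB u, Finset.sum_comm]
  have stepC : ∀ d ∈ m.divisors,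
      (∑ u : (ZMod m)ˣ, if (d : ℤ) ∣ ((((u : ZMod m).val : ℤ)) - s) then d.totient else 0)
      = if Int.gcd (d : ℤ) s = 1 then m.totient else 0 := by
    intro d hd
    obtain ⟨hdm, -⟩ := Nat.mem_divisors.mp hd
    rw [Finset.sum_ite, Finset.sum_const, Finset.sum_const_zero, add_zero, smul_eq_mul,
      menon_count m d hdm s]
    by_cases hs : Int.gcd (d : ℤ) s = 1
    · rw [if_pos hs, if_pos hs, Nat.div_mul_cancel (Nat.totient_dvd_of_dvd hdm)]
    · rw [if_neg hs, if_neg hs, zero_mul]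
  rw [Finset.sum_congr rfl stepC, ← Finset.sum_filter, Finset.sum_const, smul_eq_mul]
  rfl
end

section
/- For every positive integer k, the Eckford Cohen totient function φ^(k) is a multiplicative arithmetic function: if m₁ and m₂ are relatively prime positive integers, then φ^(k)(m₁m₂) = φ^(k)(m₁)·φ^(k)(m₂). -/
open scoped Classical

/-- The k-th power greatest common divisor `(a,b)_k`: the largest k-th power `d^k`
(with `d` a positive integer) dividing both `a` and `b`. -/
noncomputable def kgcd (k : ℕ) (a b : ℤ) : ℕ :=
  sSup {n : ℕ | (∃ d : ℕ, 0 < d ∧ n = d ^ k) ∧ (n : ℤ) ∣ a ∧ (n : ℤ) ∣ b}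

/-- The Eckford Cohen totient function `φ^(k)(m)`: the number of integers `a` with
`1 ≤ a ≤ m^k` and `(a, m^k)_k = 1`. -/
noncomputable def cohenTotient (k m : ℕ) : ℕ :=
  ((Finset.Icc 1 (m ^ k)).filter fun a : ℕ => kgcd k (a : ℤ) ((m : ℤ) ^ k) = 1).card

/-- Auxiliary predicate: no `k`-th power of a prime divisor of `m` divides `a`. -/
def CQ (k m a : ℕ) : Prop := ∀ p : ℕ, p.Prime → p ∣ m → ¬ p ^ k ∣ a

lemma kgcd_eq_one_iff {k m a : ℕ} (hk : 0 < k) (ha : 0 < a) :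
    kgcd k (a : ℤ) ((m : ℤ) ^ k) = 1 ↔ CQ k m a := by
  set S : Set ℕ :=
    {n : ℕ | (∃ d : ℕ, 0 < d ∧ n = d ^ k) ∧ (n : ℤ) ∣ (a : ℤ) ∧ (n : ℤ) ∣ (m : ℤ) ^ k} with hS
  have h1 : (1 : ℕ) ∈ S := ⟨⟨1, one_pos, (one_pow k).symm⟩, by simp, by simp⟩
  have hbdd : BddAbove S := by
    refine ⟨a, fun n hn => ?_⟩
    exact Nat.le_of_dvd ha (Int.natCast_dvd_natCast.mp hn.2.1)
  constructor
  · intro hsup p hp hpm hpa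
    have hmem : p ^ k ∈ S := by
      refine ⟨⟨p, hp.pos, rfl⟩, ?_, ?_⟩
      · exact_mod_cast Int.natCast_dvd_natCast.mpr hpa
      · push_cast
        exact pow_dvd_pow_of_dvd (Int.natCast_dvd_natCast.mpr hpm) k
    have hle : p ^ k ≤ 1 := by
      have := le_csSup hbdd hmem
      rwa [show sSup S = 1 from hsup] at this
    have : 1 < p ^ k := Nat.one_lt_pow hk.ne' hp.one_lt
    omega
  · intro hQ
    refine le_antisymm (csSup_le ⟨1, h1⟩ ?_) (le_csSup hbdd h1)
    rintro n ⟨⟨d, hd, rfl⟩, hda, hdm⟩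
    rcases eq_or_lt_of_le (show 1 ≤ d from hd) with hd1 | hd1
    · simp [← hd1]
    · exfalso
      obtain ⟨p, hp, hpd⟩ := Nat.exists_prime_and_dvd (by omega : d ≠ 1)
      have hdm' : d ^ k ∣ m ^ k := by exact_mod_cast hdm
      have hdm2 : d ∣ m := (Nat.pow_dvd_pow_iff hk.ne').mp hdm'
      have hda' : d ^ k ∣ a := Int.natCast_dvd_natCast.mp hda
      exact hQ p hp (hpd.trans hdm2) ((pow_dvd_pow_of_dvd hpd k).trans hda')

lemma CQ_mod {k m : ℕ} (a : ℕ) : CQ k m a ↔ CQ k m (a % m ^ k) := by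
  have key : ∀ p : ℕ, p ∣ m → (p ^ k ∣ a ↔ p ^ k ∣ a % m ^ k) := by
    intro p hpm
    exact (Nat.dvd_mod_iff (pow_dvd_pow_of_dvd hpm k)).symm
  constructor
  · intro H p hp hpm hdvd
    exact H p hp hpm ((key p hpm).mpr hdvd)
  · intro H p hp hpm hdvd
    exact H p hp hpm ((key p hpm).mp hdvd)

lemma CQ_mul {k m₁ m₂ a : ℕ} : CQ k (m₁ * m₂) a ↔ CQ k m₁ a ∧ CQ k m₂ a := by
  constructor
  · intro H
    exact ⟨fun p hp hpm => H p hp (hpm.mul_right m₂),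
           fun p hp hpm => H p hp (hpm.mul_left m₁)⟩
  · rintro ⟨H₁, H₂⟩ p hp hpm
    rcases hp.dvd_mul.mp hpm with h' | h'
    · exact H₁ p hp h'
    · exact H₂ p hp h'

lemma cohenTotient_eq_card {k m : ℕ} (hk : 0 < k) (hm : 0 < m) :
    cohenTotient k m = ((Finset.range (m ^ k)).filter fun a => CQ k m a).card := by
  have hN : 0 < m ^ k := pow_pos hm k
  unfold cohenTotient
  apply Finset.card_bij (fun a _ => a % m ^ k)
  · intro a ha
    rw [Finset.mem_filter, Finset.mem_Icc] at ha
    rw [Finset.mem_filter, Finset.mem_range]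
    exact ⟨Nat.mod_lt a hN, (CQ_mod a).mp ((kgcd_eq_one_iff hk ha.1.1).mp ha.2)⟩
  · intro a ha b hb hab
    rw [Finset.mem_filter, Finset.mem_Icc] at ha hb
    rcases eq_or_lt_of_le ha.1.2 with h1 | h1 <;> rcases eq_or_lt_of_le hb.1.2 with h2 | h2
    · omega
    · rw [h1, Nat.mod_self, Nat.mod_eq_of_lt h2] at hab; omega
    · rw [h2, Nat.mod_self, Nat.mod_eq_of_lt h1] at hab; omega
    · rwa [Nat.mod_eq_of_lt h1, Nat.mod_eq_of_lt h2] at hab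
  · intro b hb
    rw [Finset.mem_filter, Finset.mem_range] at hb
    have hb0 : (if b = 0 then m ^ k else b) % m ^ k = b := by
      split
      · simp [Nat.mod_self]; omega
      · exact Nat.mod_eq_of_lt hb.1
    refine ⟨if b = 0 then m ^ k else b, ?_, hb0⟩
    rw [Finset.mem_filter, Finset.mem_Icc]
    have hpos : 0 < (if b = 0 then m ^ k else b) := by split <;> omega
    refine ⟨⟨hpos, by split <;> omega⟩, ?_⟩
    rw [kgcd_eq_one_iff hk hpos, CQ_mod, hb0]
    exact hb.2

lemma card_CQ_mul {k m₁ m₂ : ℕ} (hm₁ : 0 < m₁) (hm₂ : 0 < m₂) (h : Nat.Coprime m₁ m₂) :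
    ((Finset.range ((m₁ * m₂) ^ k)).filter fun a => CQ k (m₁ * m₂) a).card
      = ((Finset.range (m₁ ^ k)).filter fun a => CQ k m₁ a).card
        * ((Finset.range (m₂ ^ k)).filter fun a => CQ k m₂ a).card := by
  set M₁ := m₁ ^ k with hM₁
  set M₂ := m₂ ^ k with hM₂
  have hM₁0 : 0 < M₁ := pow_pos hm₁ k
  have hM₂0 : 0 < M₂ := pow_pos hm₂ k
  have hco : Nat.Coprime M₁ M₂ := Nat.Coprime.pow k k h
  have hMM : (m₁ * m₂) ^ k = M₁ * M₂ := mul_pow m₁ m₂ k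
  rw [← Finset.card_product, ← Finset.filter_product]
  apply Finset.card_bij (fun a _ => (a % M₁, a % M₂))
  · intro a ha
    rw [Finset.mem_filter, Finset.mem_range, hMM] at ha
    rw [Finset.mem_filter, Finset.mem_product, Finset.mem_range, Finset.mem_range]
    obtain ⟨H₁, H₂⟩ := CQ_mul.mp ha.2
    exact ⟨⟨Nat.mod_lt a hM₁0, Nat.mod_lt a hM₂0⟩, (CQ_mod a).mp H₁, (CQ_mod a).mp H₂⟩
  · intro a ha b hb hab
    rw [Finset.mem_filter, Finset.mem_range, hMM] at ha hb
    have h₁ : a ≡ b [MOD M₁] := congrArg Prod.fst hab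
    have h₂ : a ≡ b [MOD M₂] := congrArg Prod.snd hab
    have := (Nat.modEq_and_modEq_iff_modEq_mul hco).mp ⟨h₁, h₂⟩
    rwa [Nat.ModEq, Nat.mod_eq_of_lt ha.1, Nat.mod_eq_of_lt hb.1] at this
  · rintro ⟨b₁, b₂⟩ hb
    rw [Finset.mem_filter, Finset.mem_product, Finset.mem_range, Finset.mem_range] at hb
    obtain ⟨x, hx₁, hx₂⟩ := Nat.chineseRemainder hco b₁ b₂
    refine ⟨x % (M₁ * M₂), ?_, ?_⟩
    · rw [Finset.mem_filter, Finset.mem_range, hMM]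
      refine ⟨Nat.mod_lt x (Nat.mul_pos hM₁0 hM₂0), ?_⟩
      rw [CQ_mul]
      constructor
      · rw [CQ_mod, Nat.mod_mod_of_dvd _ (Dvd.intro M₂ rfl)]
        have : x % M₁ = b₁ := by rw [hx₁, Nat.mod_eq_of_lt hb.1.1]
        rw [this]; exact hb.2.1
      · rw [CQ_mod, Nat.mod_mod_of_dvd _ (Dvd.intro_left M₁ rfl)]
        have : x % M₂ = b₂ := by rw [hx₂, Nat.mod_eq_of_lt hb.1.2]
        rw [this]; exact hb.2.2
    · have e₁ : x % (M₁ * M₂) % M₁ = b₁ := by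
        rw [Nat.mod_mod_of_dvd _ (Dvd.intro M₂ rfl), hx₁, Nat.mod_eq_of_lt hb.1.1]
      have e₂ : x % (M₁ * M₂) % M₂ = b₂ := by
        rw [Nat.mod_mod_of_dvd _ (Dvd.intro_left M₁ rfl), hx₂, Nat.mod_eq_of_lt hb.1.2]
      exact Prod.ext e₁ e₂

/-- The Eckford Cohen totient function is multiplicative. -/
theorem cohenTotient_multiplicative (k : ℕ) (hk : 0 < k) (m₁ m₂ : ℕ)
    (hm₁ : 0 < m₁) (hm₂ : 0 < m₂) (h : Nat.Coprime m₁ m₂) :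
    cohenTotient k (m₁ * m₂) = cohenTotient k m₁ * cohenTotient k m₂ := by
  rw [cohenTotient_eq_card hk (Nat.mul_pos hm₁ hm₂), cohenTotient_eq_card hk hm₁,
    cohenTotient_eq_card hk hm₂, card_CQ_mul hm₁ hm₂ h]
end

section
/- Let k be a positive integer and let m₁ and m₂ be relatively prime positive integers. If A₁ is a k-th power reduced set of residues modulo m₁ and A₂ is a k-th power reduced set of residues modulo m₂, then the set A = { a₁·m₂^k + a₂·m₁^k : a₁ ∈ A₁, a₂ ∈ A₂ } is a k-th power reduced set of residues modulo m₁m₂. -/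
/-- A k-th power reduced set of residues modulo `m`: a set of `φ^(k)(m)` integers, one
from each congruence class modulo `m^k` whose elements `a` satisfy `(a, m^k)_k = 1`. -/
def IsKthPowerReducedResidueSet (k m : ℕ) (A : Finset ℤ) : Prop :=
  A.card = cohenTotient k m ∧
  (∀ a ∈ A, kgcd k a ((m : ℤ) ^ k) = 1) ∧
  ∀ a ∈ A, ∀ b ∈ A, a ≡ b [ZMOD ((m : ℤ) ^ k)] → a = b

/-- auxiliary coprimality-style predicate: no nontrivial common k-th power divisor -/
def KCop (k : ℕ) (a b : ℤ) : Prop := ∀ d : ℕ, 1 < d → ((d:ℤ)^k ∣ a → ¬ (d:ℤ)^k ∣ b)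

lemma kgcd_congr {k : ℕ} {a b c : ℤ} (hab : c ∣ a - b) : kgcd k a c = kgcd k b c := by
  unfold kgcd
  congr 1
  ext n
  simp only [Set.mem_setOf_eq, and_congr_right_iff]
  intro _
  constructor
  · rintro ⟨h2, h3⟩
    refine ⟨?_, h3⟩
    have := dvd_sub h2 (h3.trans hab)
    simpa using this
  · rintro ⟨h2, h3⟩
    refine ⟨?_, h3⟩
    have := dvd_add h2 (h3.trans hab)
    simpa using this

lemma kgcd_eq_one_iff_s8 {k : ℕ} (hk : 0 < k) {a b : ℤ} (hb : b ≠ 0) :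
    kgcd k a b = 1 ↔ KCop k a b := by
  constructor
  · intro hval d hd hda hdb
    have hmem : d ^ k ∈ {n : ℕ | (∃ e : ℕ, 0 < e ∧ n = e ^ k) ∧ (n:ℤ) ∣ a ∧ (n:ℤ) ∣ b} := by
      refine ⟨⟨d, by omega, rfl⟩, ?_, ?_⟩ <;> push_cast <;> assumption
    have hbdd : BddAbove {n : ℕ | (∃ e : ℕ, 0 < e ∧ n = e ^ k) ∧ (n:ℤ) ∣ a ∧ (n:ℤ) ∣ b} := by
      refine ⟨b.natAbs, fun n hn => ?_⟩
      have h1 : (n:ℤ) ∣ |b| := (dvd_abs _ _).mpr hn.2.2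
      have h2 : (n:ℤ) ≤ |b| := Int.le_of_dvd (abs_pos.mpr hb) h1
      rw [Int.abs_eq_natAbs] at h2
      exact_mod_cast h2
    have hle : d ^ k ≤ kgcd k a b := le_csSup hbdd hmem
    have : 1 < d ^ k := Nat.one_lt_pow hk.ne' hd
    omega
  · intro hK
    have hset : {n : ℕ | (∃ e : ℕ, 0 < e ∧ n = e ^ k) ∧ (n:ℤ) ∣ a ∧ (n:ℤ) ∣ b} = {1} := by
      ext n
      simp only [Set.mem_setOf_eq, Set.mem_singleton_iff]
      constructor
      · rintro ⟨⟨e, he, rfl⟩, h1, h2⟩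
        rcases Nat.lt_or_ge e 2 with h' | h'
        · have he1 : e = 1 := by omega
          subst he1
          simp
        · refine absurd ?_ (hK e h' (by push_cast at h1 ⊢; exact h1))
          push_cast at h2 ⊢
          exact h2
      · rintro rfl
        exact ⟨⟨1, one_pos, (one_pow k).symm⟩, by simp, by simp⟩
    unfold kgcd
    rw [hset, csSup_singleton]

lemma KCop_congr {k : ℕ} {a a' b : ℤ} (hb : b ∣ a - a') : KCop k a b ↔ KCop k a' b := by
  have key : ∀ {x y : ℤ}, b ∣ x - y → KCop k x b → KCop k y b := by
    intro x y hxy hx d hd hdy hdb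
    refine hx d hd ?_ hdb
    have := dvd_add hdy (hdb.trans hxy)
    simpa using this
  exact ⟨key hb, key (dvd_sub_comm.mp hb)⟩

lemma KCop_mul_right {k : ℕ} {a b c : ℤ}
    (hcop : ∀ d : ℕ, 1 < d → (d:ℤ)^k ∣ b → IsCoprime ((d:ℤ)^k) c) :
    KCop k (a * c) b ↔ KCop k a b := by
  constructor
  · intro hK d hd hda hdb
    exact hK d hd (hda.mul_right c) hdb
  · intro hK d hd hdac hdb
    exact hK d hd ((hcop d hd hdb).dvd_of_dvd_mul_right hdac) hdb

lemma KCop_mul_modulus {k : ℕ} (hk : 0 < k) {a : ℤ} {n₁ n₂ : ℕ}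
    (hcop : Nat.Coprime n₁ n₂) :
    KCop k a ((n₁ : ℤ) * (n₂ : ℤ)) ↔ KCop k a (n₁ : ℤ) ∧ KCop k a (n₂ : ℤ) := by
  constructor
  · intro hK
    constructor
    · intro d hd hda hdn
      exact hK d hd hda (hdn.mul_right _)
    · intro d hd hda hdn
      exact hK d hd hda (hdn.mul_left _)
  · rintro ⟨h1, h2⟩ d hd hda hdn
    have hdnN : d ^ k ∣ n₁ * n₂ := by
      have : ((d ^ k : ℕ) : ℤ) ∣ ((n₁ * n₂ : ℕ) : ℤ) := by push_cast; exact hdn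
      exact_mod_cast this
    obtain ⟨p, hp, hpd⟩ := Nat.exists_prime_and_dvd (by omega : d ≠ 1)
    have hpk : p ^ k ∣ d ^ k := pow_dvd_pow_of_dvd hpd k
    have hpa : ((p : ℤ))^k ∣ a := by
      refine dvd_trans ?_ hda
      have := Int.natCast_dvd_natCast.mpr hpk
      push_cast at this
      exact this
    have hpN : p ^ k ∣ n₁ * n₂ := hpk.trans hdnN
    have hpdvd : p ∣ n₁ * n₂ := (dvd_pow_self p hk.ne').trans hpN
    rcases (Nat.Prime.dvd_mul hp).mp hpdvd with hc | hc
    · have copk : Nat.Coprime (p^k) n₂ := (Nat.Coprime.coprime_dvd_left hc hcop).pow_left k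
      have hfin : p ^ k ∣ n₁ := copk.dvd_of_dvd_mul_right hpN
      refine h1 p hp.one_lt hpa ?_
      have := Int.natCast_dvd_natCast.mpr hfin
      push_cast at this
      exact this
    · have copk : Nat.Coprime (p^k) n₁ :=
        (Nat.Coprime.coprime_dvd_left hc hcop.symm).pow_left k
      have hfin : p ^ k ∣ n₂ := copk.dvd_of_dvd_mul_left hpN
      refine h2 p hp.one_lt hpa ?_
      have := Int.natCast_dvd_natCast.mpr hfin
      push_cast at this
      exact this

lemma val_sub_dvd {n : ℕ} [NeZero n] (a : ℤ) : (n:ℤ) ∣ (((a : ZMod n).val : ℤ)) - a := by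
  have h1 : ((((a : ZMod n).val : ℤ)) : ZMod n) = ((a : ℤ) : ZMod n) := by
    push_cast
    exact ZMod.natCast_rightInverse _
  exact (ZMod.intCast_eq_intCast_iff_dvd_sub _ _ _).mp h1.symm

lemma cohenTotient_eq {k : ℕ} (hk : 0 < k) {m : ℕ} (hm : 0 < m) [NeZero (m^k)] :
    cohenTotient k m =
      (Finset.univ.filter fun x : ZMod (m^k) => kgcd k (x.val : ℤ) ((m:ℤ)^k) = 1).card := by
  have hn0 : 0 < m ^ k := pow_pos hm k
  have hcast : ((m:ℤ))^k = ((m ^ k : ℕ) : ℤ) := by push_cast; ring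
  unfold cohenTotient
  apply Finset.card_bij' (fun a _ => ((a : ℕ) : ZMod (m ^ k)))
    (fun x _ => if x.val = 0 then m ^ k else x.val)
  · intro a ha
    simp only [Finset.mem_filter, Finset.mem_Icc] at ha ⊢
    refine ⟨Finset.mem_univ _, ?_⟩
    rw [← ha.2]
    apply kgcd_congr
    rw [ZMod.val_natCast, hcast]
    exact_mod_cast (Nat.modEq_iff_dvd.mp (Nat.mod_modEq a (m ^ k)).symm)
  · intro x hx
    simp only [Finset.mem_filter, Finset.mem_univ, true_and] at hx
    simp only [Finset.mem_filter, Finset.mem_Icc]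
    constructor
    · split_ifs with hv
      · exact ⟨hn0, le_refl _⟩
      · exact ⟨Nat.one_le_iff_ne_zero.mpr hv, (ZMod.val_lt x).le⟩
    · rw [← hx]
      apply kgcd_congr
      split_ifs with hv
      · rw [hv, hcast]
        simp
      · simp
  · intro a ha
    simp only [Finset.mem_filter, Finset.mem_Icc] at ha
    rw [ZMod.val_natCast]
    rcases eq_or_lt_of_le ha.1.2 with hcase | hcase
    · rw [hcase, Nat.mod_self]
      simp
    · rw [Nat.mod_eq_of_lt hcase]
      simp [Nat.one_le_iff_ne_zero.mp ha.1.1]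
  · intro x hx
    split_ifs with hv
    · rw [ZMod.natCast_self]
      exact ((ZMod.val_eq_zero x).mp hv).symm
    · exact ZMod.natCast_rightInverse x

lemma image_eq_filter {k : ℕ} (hk : 0 < k) {m : ℕ} (hm : 0 < m) [NeZero (m^k)] {A : Finset ℤ}
    (hA : IsKthPowerReducedResidueSet k m A) :
    A.image (fun a => ((a : ℤ) : ZMod (m^k))) =
      Finset.univ.filter fun x : ZMod (m^k) => kgcd k (x.val : ℤ) ((m:ℤ)^k) = 1 := by
  obtain ⟨hcard, hgcd, hinj⟩ := hA
  have hcast : ((m:ℤ))^k = ((m ^ k : ℕ) : ℤ) := by push_cast; ring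
  have hsub : A.image (fun a => ((a : ℤ) : ZMod (m^k))) ⊆
      Finset.univ.filter fun x : ZMod (m^k) => kgcd k (x.val : ℤ) ((m:ℤ)^k) = 1 := by
    intro x hx
    rcases Finset.mem_image.mp hx with ⟨a, ha, rfl⟩
    simp only [Finset.mem_filter, Finset.mem_univ, true_and]
    rw [← hgcd a ha]
    apply kgcd_congr
    rw [hcast]
    exact val_sub_dvd a
  have hcard2 : (A.image (fun a => ((a : ℤ) : ZMod (m^k)))).card = A.card := by
    apply Finset.card_image_of_injOn
    intro a ha b hb hab
    apply hinj a ha b hb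
    have := (ZMod.intCast_eq_intCast_iff _ _ _).mp hab
    rwa [← hcast] at this
  refine Finset.eq_of_subset_of_card_le hsub ?_
  rw [hcard2, hcard, cohenTotient_eq hk hm]

/-- If `A₁` and `A₂` are k-th power reduced sets of residues modulo coprime `m₁` and
`m₂`, then `{a₁·m₂^k + a₂·m₁^k}` is a k-th power reduced set of residues modulo
`m₁·m₂`. -/
theorem reducedResidueSet_mul (k : ℕ) (hk : 0 < k) (m₁ m₂ : ℕ)
    (hm₁ : 0 < m₁) (hm₂ : 0 < m₂) (h : Nat.Coprime m₁ m₂)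
    (A₁ A₂ : Finset ℤ)
    (hA₁ : IsKthPowerReducedResidueSet k m₁ A₁)
    (hA₂ : IsKthPowerReducedResidueSet k m₂ A₂) :
    IsKthPowerReducedResidueSet k (m₁ * m₂)
      ((A₁ ×ˢ A₂).image fun p => p.1 * (m₂ : ℤ) ^ k + p.2 * (m₁ : ℤ) ^ k) := by
  obtain ⟨hc₁, hg₁, hi₁⟩ := id hA₁
  obtain ⟨hc₂, hg₂, hi₂⟩ := id hA₂
  haveI : NeZero (m₁ ^ k) := ⟨(pow_pos hm₁ k).ne'⟩
  haveI : NeZero (m₂ ^ k) := ⟨(pow_pos hm₂ k).ne'⟩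
  haveI : NeZero ((m₁ * m₂) ^ k) := ⟨(pow_pos (Nat.mul_pos hm₁ hm₂) k).ne'⟩
  have hN1 : ((m₁:ℤ))^k ≠ 0 := by positivity
  have hN2 : ((m₂:ℤ))^k ≠ 0 := by positivity
  have hN : (((m₁ * m₂ : ℕ) : ℤ))^k ≠ 0 := by positivity
  have hsplit : (((m₁ * m₂ : ℕ) : ℤ))^k = ((m₁ ^ k : ℕ) : ℤ) * ((m₂ ^ k : ℕ) : ℤ) := by
    push_cast; ring
  have hcop12 : Nat.Coprime (m₁ ^ k) (m₂ ^ k) := Nat.Coprime.pow k k h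
  have hcopZ : IsCoprime ((m₁:ℤ)^k) ((m₂:ℤ)^k) := by
    have := hcop12.isCoprime
    push_cast at this
    exact this
  have hcast1 : ((m₁:ℤ))^k = ((m₁ ^ k : ℕ) : ℤ) := by push_cast; ring
  have hcast2 : ((m₂:ℤ))^k = ((m₂ ^ k : ℕ) : ℤ) := by push_cast; ring
  -- each element of the image is "good"
  have hgood : ∀ a₁ ∈ A₁, ∀ a₂ ∈ A₂,
      kgcd k (a₁ * (m₂:ℤ)^k + a₂ * (m₁:ℤ)^k) ((((m₁ * m₂ : ℕ) : ℤ))^k) = 1 := by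
    intro a₁ ha₁ a₂ ha₂
    rw [kgcd_eq_one_iff_s8 hk hN, hsplit, KCop_mul_modulus hk hcop12]
    constructor
    · rw [← hcast1]
      rw [KCop_congr (show ((m₁:ℤ))^k ∣ (a₁ * (m₂:ℤ)^k + a₂ * (m₁:ℤ)^k) - a₁ * (m₂:ℤ)^k by
        simpa using dvd_mul_left ((m₁:ℤ)^k) a₂)]
      rw [KCop_mul_right (fun d hd hdb => hcopZ.of_isCoprime_of_dvd_left hdb)]
      rw [← kgcd_eq_one_iff_s8 hk hN1]
      exact hg₁ a₁ ha₁
    · rw [← hcast2]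
      rw [KCop_congr (show ((m₂:ℤ))^k ∣ (a₁ * (m₂:ℤ)^k + a₂ * (m₁:ℤ)^k) - a₂ * (m₁:ℤ)^k by
        simpa using dvd_mul_left ((m₂:ℤ)^k) a₁)]
      rw [KCop_mul_right (fun d hd hdb => hcopZ.symm.of_isCoprime_of_dvd_left hdb)]
      rw [← kgcd_eq_one_iff_s8 hk hN2]
      exact hg₂ a₂ ha₂
  -- congruent images force equal parameters
  have hdist : ∀ a₁ ∈ A₁, ∀ a₂ ∈ A₂, ∀ b₁ ∈ A₁, ∀ b₂ ∈ A₂,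
      ((((m₁ * m₂ : ℕ) : ℤ))^k ∣
        (b₁ * (m₂:ℤ)^k + b₂ * (m₁:ℤ)^k) - (a₁ * (m₂:ℤ)^k + a₂ * (m₁:ℤ)^k)) →
      a₁ = b₁ ∧ a₂ = b₂ := by
    intro a₁ ha₁ a₂ ha₂ b₁ hb₁ b₂ hb₂ hdvd
    rw [hsplit, ← hcast1, ← hcast2] at hdvd
    constructor
    · apply hi₁ a₁ ha₁ b₁ hb₁
      rw [Int.modEq_iff_dvd]
      have hd1 : ((m₁:ℤ))^k ∣
          (b₁ * (m₂:ℤ)^k + b₂ * (m₁:ℤ)^k) - (a₁ * (m₂:ℤ)^k + a₂ * (m₁:ℤ)^k) :=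
        (dvd_mul_right _ _).trans hdvd
      have h1 : ((m₁:ℤ))^k ∣ (b₁ - a₁) * (m₂:ℤ)^k := by
        have : ((m₁:ℤ))^k ∣ _ := dvd_sub hd1 (dvd_mul_left ((m₁:ℤ)^k) (b₂ - a₂))
        convert this using 1
        ring
      exact hcopZ.dvd_of_dvd_mul_right h1
    · apply hi₂ a₂ ha₂ b₂ hb₂
      rw [Int.modEq_iff_dvd]
      have hd2 : ((m₂:ℤ))^k ∣
          (b₁ * (m₂:ℤ)^k + b₂ * (m₁:ℤ)^k) - (a₁ * (m₂:ℤ)^k + a₂ * (m₁:ℤ)^k) :=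
        (dvd_mul_left _ _).trans hdvd
      have h2 : ((m₂:ℤ))^k ∣ (b₂ - a₂) * (m₁:ℤ)^k := by
        have : ((m₂:ℤ))^k ∣ _ := dvd_sub hd2 (dvd_mul_left ((m₂:ℤ)^k) (b₁ - a₁))
        convert this using 1
        ring
      exact hcopZ.symm.dvd_of_dvd_mul_right h2
  refine ⟨?_, ?_, ?_⟩
  · -- cardinality
    set A : Finset ℤ := (A₁ ×ˢ A₂).image fun p => p.1 * (m₂ : ℤ) ^ k + p.2 * (m₁ : ℤ) ^ k
      with hAdef
    have hmemA : ∀ x ∈ A, ∃ a₁ ∈ A₁, ∃ a₂ ∈ A₂, x = a₁ * (m₂:ℤ)^k + a₂ * (m₁:ℤ)^k := by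
      intro x hx
      rcases Finset.mem_image.mp hx with ⟨p, hp, rfl⟩
      rcases Finset.mem_product.mp hp with ⟨hp1, hp2⟩
      exact ⟨p.1, hp1, p.2, hp2, rfl⟩
    have hcastN : (((m₁ * m₂ : ℕ) : ℤ))^k = (((m₁ * m₂)^k : ℕ) : ℤ) := by push_cast; ring
    have himg : A.image (fun a => ((a : ℤ) : ZMod ((m₁ * m₂)^k))) =
        Finset.univ.filter
          fun x : ZMod ((m₁ * m₂)^k) => kgcd k (x.val : ℤ) (((m₁ * m₂ : ℕ) : ℤ)^k) = 1 := by
      apply Finset.Subset.antisymm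
      · intro x hx
        rcases Finset.mem_image.mp hx with ⟨a, ha, rfl⟩
        rcases hmemA a ha with ⟨a₁, ha₁, a₂, ha₂, rfl⟩
        simp only [Finset.mem_filter, Finset.mem_univ, true_and]
        rw [← hgood a₁ ha₁ a₂ ha₂]
        apply kgcd_congr
        rw [hcastN]
        exact val_sub_dvd _
      · intro x hx
        simp only [Finset.mem_filter, Finset.mem_univ, true_and] at hx
        set b : ℤ := (x.val : ℤ) with hbdef
        have hxb : ((b : ℤ) : ZMod ((m₁ * m₂)^k)) = x := by
          rw [hbdef]
          push_cast
          exact ZMod.natCast_rightInverse _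
        have hKb : KCop k b (((m₁:ℤ))^k) ∧ KCop k b (((m₂:ℤ))^k) := by
          have := (kgcd_eq_one_iff_s8 hk hN).mp hx
          rw [hsplit, KCop_mul_modulus hk hcop12] at this
          rw [hcast1, hcast2]
          exact this
        obtain ⟨s, u, hsu⟩ := id hcopZ
        -- a₁ from class of u * b mod m₁^k
        have hK1 : kgcd k (u * b) ((m₁:ℤ)^k) = 1 := by
          rw [kgcd_eq_one_iff_s8 hk hN1]
          intro d hd hdub hdn1
          have hcu : IsCoprime ((d:ℤ)^k) u := by
            have h1 : IsCoprime u ((m₁:ℤ)^k) := ⟨(m₂:ℤ)^k, s, by linear_combination hsu⟩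
            exact (h1.of_isCoprime_of_dvd_right hdn1).symm
          exact hKb.1 d hd (hcu.dvd_of_dvd_mul_left hdub) hdn1
        have hK2 : kgcd k (s * b) ((m₂:ℤ)^k) = 1 := by
          rw [kgcd_eq_one_iff_s8 hk hN2]
          intro d hd hdsb hdn2
          have hcu : IsCoprime ((d:ℤ)^k) s := by
            have h1 : IsCoprime s ((m₂:ℤ)^k) := ⟨(m₁:ℤ)^k, u, by linear_combination hsu⟩
            exact (h1.of_isCoprime_of_dvd_right hdn2).symm
          exact hKb.2 d hd (hcu.dvd_of_dvd_mul_left hdsb) hdn2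
        have hmem1 : ((u * b : ℤ) : ZMod (m₁^k)) ∈
            A₁.image (fun a => ((a : ℤ) : ZMod (m₁^k))) := by
          rw [image_eq_filter hk hm₁ hA₁]
          simp only [Finset.mem_filter, Finset.mem_univ, true_and]
          rw [← hK1]
          apply kgcd_congr
          rw [hcast1]
          exact val_sub_dvd _
        have hmem2 : ((s * b : ℤ) : ZMod (m₂^k)) ∈
            A₂.image (fun a => ((a : ℤ) : ZMod (m₂^k))) := by
          rw [image_eq_filter hk hm₂ hA₂]
          simp only [Finset.mem_filter, Finset.mem_univ, true_and]
          rw [← hK2]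
          apply kgcd_congr
          rw [hcast2]
          exact val_sub_dvd _
        rcases Finset.mem_image.mp hmem1 with ⟨a₁, ha₁, heq1⟩
        rcases Finset.mem_image.mp hmem2 with ⟨a₂, ha₂, heq2⟩
        have hd1 : ((m₁ ^ k : ℕ) : ℤ) ∣ (u * b) - a₁ :=
          (ZMod.intCast_eq_intCast_iff_dvd_sub _ _ _).mp heq1
        have hd2 : ((m₂ ^ k : ℕ) : ℤ) ∣ (s * b) - a₂ :=
          (ZMod.intCast_eq_intCast_iff_dvd_sub _ _ _).mp heq2
        rw [← hcast1] at hd1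
        rw [← hcast2] at hd2
        apply Finset.mem_image.mpr
        refine ⟨a₁ * (m₂:ℤ)^k + a₂ * (m₁:ℤ)^k, ?_, ?_⟩
        · have hpm : (a₁, a₂) ∈ A₁ ×ˢ A₂ := Finset.mem_product.mpr ⟨ha₁, ha₂⟩
          exact Finset.mem_image_of_mem _ hpm
        · rw [← hxb]
          apply (ZMod.intCast_eq_intCast_iff_dvd_sub _ _ _).mpr
          have hdvdN : ((m₁:ℤ)^k) * ((m₂:ℤ)^k) ∣ b - (a₁ * (m₂:ℤ)^k + a₂ * (m₁:ℤ)^k) := by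
            apply IsCoprime.mul_dvd hcopZ
            · have heq : b - (a₁ * (m₂:ℤ)^k + a₂ * (m₁:ℤ)^k) =
                  b * s * (m₁:ℤ)^k + ((u * b) - a₁) * (m₂:ℤ)^k - a₂ * (m₁:ℤ)^k := by
                linear_combination (-b) * hsu
              rw [heq]
              exact dvd_sub (dvd_add (dvd_mul_left _ _) (hd1.mul_right _))
                (dvd_mul_left _ _)
            · have heq : b - (a₁ * (m₂:ℤ)^k + a₂ * (m₁:ℤ)^k) =
                  ((s * b) - a₂) * (m₁:ℤ)^k + b * u * (m₂:ℤ)^k - a₁ * (m₂:ℤ)^k := by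
                linear_combination (-b) * hsu
              rw [heq]
              exact dvd_sub (dvd_add (hd2.mul_right _) (dvd_mul_left _ _))
                (dvd_mul_left _ _)
          have : (((m₁ * m₂)^k : ℕ) : ℤ) = ((m₁:ℤ)^k) * ((m₂:ℤ)^k) := by push_cast; ring
          rw [this]
          exact hdvdN
    have hinjA : Set.InjOn (fun a => ((a : ℤ) : ZMod ((m₁ * m₂)^k))) A := by
      intro a ha b hb hab
      rcases hmemA a ha with ⟨a₁, ha₁, a₂, ha₂, rfl⟩
      rcases hmemA b hb with ⟨b₁, hb₁, b₂, hb₂, rfl⟩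
      have hdvd := (ZMod.intCast_eq_intCast_iff_dvd_sub _ _ _).mp hab
      rw [← hcastN] at hdvd
      obtain ⟨he1, he2⟩ := hdist a₁ ha₁ a₂ ha₂ b₁ hb₁ b₂ hb₂ hdvd
      rw [he1, he2]
    calc A.card = (A.image (fun a => ((a : ℤ) : ZMod ((m₁ * m₂)^k)))).card :=
          (Finset.card_image_of_injOn hinjA).symm
      _ = cohenTotient k (m₁ * m₂) := by
          rw [himg, ← cohenTotient_eq hk (Nat.mul_pos hm₁ hm₂)]
  · -- all elements good
    intro a ha
    rcases Finset.mem_image.mp ha with ⟨p, hp, rfl⟩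
    rcases Finset.mem_product.mp hp with ⟨hp1, hp2⟩
    exact hgood p.1 hp1 p.2 hp2
  · -- pairwise incongruent
    intro a ha b hb hab
    rcases Finset.mem_image.mp ha with ⟨p, hp, rfl⟩
    rcases Finset.mem_product.mp hp with ⟨hp1, hp2⟩
    rcases Finset.mem_image.mp hb with ⟨q, hq, rfl⟩
    rcases Finset.mem_product.mp hq with ⟨hq1, hq2⟩
    have hdvd := Int.modEq_iff_dvd.mp hab
    obtain ⟨he1, he2⟩ := hdist p.1 hp1 p.2 hp2 q.1 hq1 q.2 hq2 hdvd
    rw [he1, he2]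
end

section
/- For all positive integers k and m, P^(k)(m) = ∑_{d | m} d^k · φ^(k)(m/d), where the sum is over the positive divisors d of m. -/
lemma gcd_pow' (k e d : ℕ) (h : 0 < Nat.gcd e d) :
    Nat.gcd (e^k) (d^k) = Nat.gcd e d ^ k := by
  set g := Nat.gcd e d with hg
  have he : g * (e / g) = e := Nat.mul_div_cancel' (Nat.gcd_dvd_left e d)
  have hd : g * (d / g) = d := Nat.mul_div_cancel' (Nat.gcd_dvd_right e d)
  calc Nat.gcd (e^k) (d^k) = Nat.gcd ((g*(e/g))^k) ((g*(d/g))^k) := by rw [he, hd]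
    _ = g^k * Nat.gcd ((e/g)^k) ((d/g)^k) := by rw [mul_pow, mul_pow, Nat.gcd_mul_left]
    _ = g^k := by rw [(Nat.coprime_div_gcd_div_gcd h).pow, mul_one]

lemma lcm_pow' (k e d : ℕ) (hk : 0 < k) : Nat.lcm (e^k) (d^k) = Nat.lcm e d ^ k := by
  rcases Nat.eq_zero_or_pos e with rfl | he
  · simp [Nat.zero_pow hk]
  rcases Nat.eq_zero_or_pos d with rfl | hd
  · simp [Nat.zero_pow hk]
  have hg : 0 < Nat.gcd e d := Nat.gcd_pos_of_pos_left d he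
  have h1 : Nat.gcd e d ^ k * Nat.lcm (e ^ k) (d ^ k) = Nat.gcd e d ^ k * Nat.lcm e d ^ k := calc
    Nat.gcd e d ^ k * Nat.lcm (e ^ k) (d ^ k)
        = Nat.gcd (e^k) (d^k) * Nat.lcm (e^k) (d^k) := by rw [gcd_pow' k e d hg]
    _ = e ^ k * d ^ k := Nat.gcd_mul_lcm _ _
    _ = (e * d) ^ k := (mul_pow ..).symm
    _ = (Nat.gcd e d * Nat.lcm e d) ^ k := by rw [Nat.gcd_mul_lcm]
    _ = Nat.gcd e d ^ k * Nat.lcm e d ^ k := mul_pow ..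
  exact Nat.eq_of_mul_eq_mul_left (pow_pos hg k) h1

/-- The k-th power gcd sum function (Pillai): `P^(k)(m) = ∑_{a=1}^{m^k} (a, m^k)_k`. -/
noncomputable def Pk (k m : ℕ) : ℕ :=
  ∑ a ∈ Finset.Icc 1 (m ^ k), kgcd k (a : ℤ) ((m : ℤ) ^ k)

lemma kgcd_natCast (k a m : ℕ) :
    kgcd k (a:ℤ) ((m:ℤ)^k) = sSup {n : ℕ | (∃ e, 0 < e ∧ n = e ^ k) ∧ n ∣ a ∧ n ∣ m ^ k} := by
  have hcast : ((m:ℤ))^k = ((m^k : ℕ) : ℤ) := by push_cast; ring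
  unfold kgcd
  congr 1
  ext n
  simp only [Set.mem_setOf_eq]
  refine and_congr_right fun _ => and_congr Int.natCast_dvd_natCast ?_
  rw [hcast]
  exact Int.natCast_dvd_natCast

lemma kgcd_eq_pow_of {k m a d : ℕ} (hk : 0 < k) (hm : 0 < m) (hd : d ∣ m)
    (hdvd : d ^ k ∣ a) (hmax : ∀ e, e ∣ m → e ^ k ∣ a → e ≤ d) :
    kgcd k (a:ℤ) ((m:ℤ)^k) = d ^ k := by
  rw [kgcd_natCast]
  have hdpos : 0 < d := Nat.pos_of_dvd_of_pos hd hm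
  apply IsGreatest.csSup_eq
  refine ⟨⟨⟨d, hdpos, rfl⟩, hdvd, pow_dvd_pow_of_dvd hd k⟩, ?_⟩
  rintro n ⟨⟨e, hepos, rfl⟩, hna, hnm⟩
  have hem : e ∣ m := (Nat.pow_dvd_pow_iff hk.ne').mp hnm
  exact Nat.pow_le_pow_left (hmax e hem hna) k

lemma of_kgcd_eq_pow {k m a d : ℕ} (hk : 0 < k) (hm : 0 < m) (ha : 0 < a) (hd : d ∣ m)
    (h : kgcd k (a:ℤ) ((m:ℤ)^k) = d ^ k) :
    d ^ k ∣ a ∧ ∀ e, e ∣ m → e ^ k ∣ a → e ∣ d := by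
  rw [kgcd_natCast] at h
  set S : Set ℕ := {n | (∃ e, 0 < e ∧ n = e ^ k) ∧ n ∣ a ∧ n ∣ m ^ k} with hS
  have hdpos : 0 < d := Nat.pos_of_dvd_of_pos hd hm
  have hbdd : BddAbove S := ⟨a, fun n hn => Nat.le_of_dvd ha hn.2.1⟩
  have hne : S.Nonempty := ⟨1, ⟨1, one_pos, (one_pow k).symm⟩, one_dvd _, one_dvd _⟩
  have hmem : d ^ k ∈ S := h ▸ Nat.sSup_mem hne hbdd
  refine ⟨hmem.2.1, fun e he hea => ?_⟩
  have hepos : 0 < e := Nat.pos_of_dvd_of_pos he hm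
  have hlpos : 0 < Nat.lcm e d := Nat.lcm_pos hepos hdpos
  have hl : Nat.lcm e d ^ k ∈ S := by
    refine ⟨⟨Nat.lcm e d, hlpos, rfl⟩, ?_, pow_dvd_pow_of_dvd (Nat.lcm_dvd he hd) k⟩
    rw [← lcm_pow' k e d hk]
    exact Nat.lcm_dvd hea hmem.2.1
  have hle' : Nat.lcm e d ^ k ≤ d ^ k := h ▸ le_csSup hbdd hl
  have hle : Nat.lcm e d ≤ d := by
    by_contra hlt
    push_neg at hlt
    exact absurd hle' (not_le.mpr (Nat.pow_lt_pow_left hlt hk.ne'))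
  have heq : Nat.lcm e d = d :=
    le_antisymm hle (Nat.le_of_dvd hlpos (Nat.dvd_lcm_right e d))
  exact heq ▸ Nat.dvd_lcm_left e d

lemma exists_root {k m a : ℕ} (hk : 0 < k) (hm : 0 < m) (ha : 0 < a) :
    ∃ d ∈ m.divisors, kgcd k (a:ℤ) ((m:ℤ)^k) = d ^ k := by
  set T := m.divisors.filter (fun e => e ^ k ∣ a) with hT
  have hTne : T.Nonempty :=
    ⟨1, by simp [hT, Finset.mem_filter, Nat.mem_divisors, hm.ne', one_pow]⟩
  set d := T.max' hTne with hdd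
  have hdT : d ∈ T := T.max'_mem hTne
  rw [hT, Finset.mem_filter, Nat.mem_divisors] at hdT
  refine ⟨d, Nat.mem_divisors.mpr ⟨hdT.1.1, hm.ne'⟩, ?_⟩
  apply kgcd_eq_pow_of hk hm hdT.1.1 hdT.2
  intro e he hea
  exact T.le_max' e (by simp [hT, Finset.mem_filter, Nat.mem_divisors, he, hm.ne', hea])

lemma fiber_card {k m d : ℕ} (hk : 0 < k) (hm : 0 < m) (hd : d ∣ m) :
    ((Finset.Icc 1 (m ^ k)).filter fun a : ℕ => kgcd k (a:ℤ) ((m:ℤ)^k) = d ^ k).card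
      = cohenTotient k (m / d) := by
  have hdpos : 0 < d := Nat.pos_of_dvd_of_pos hd hm
  have hdk : 0 < d ^ k := pow_pos hdpos k
  have hm' : 0 < m / d := Nat.div_pos (Nat.le_of_dvd hm hd) hdpos
  have hmk : m ^ k = d ^ k * (m / d) ^ k := by
    rw [← mul_pow, Nat.mul_div_cancel' hd]
  unfold cohenTotient
  apply Finset.card_nbij' (i := fun a => a / d ^ k) (j := fun b => d ^ k * b)
  · intro a haF
    rw [Finset.mem_coe, Finset.mem_filter, Finset.mem_Icc] at haF
    obtain ⟨⟨h1a, ham⟩, hg⟩ := haF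
    obtain ⟨hdvd, hmax⟩ := of_kgcd_eq_pow hk hm h1a hd hg
    have hbpos : 1 ≤ a / d ^ k := (Nat.one_le_div_iff hdk).mpr (Nat.le_of_dvd h1a hdvd)
    rw [Finset.mem_coe, Finset.mem_filter, Finset.mem_Icc]
    refine ⟨⟨hbpos, ?_⟩, ?_⟩
    · calc a / d ^ k ≤ m ^ k / d ^ k := Nat.div_le_div_right ham
        _ = (m / d) ^ k := by rw [hmk, Nat.mul_div_cancel_left _ hdk]
    · rw [← one_pow k]
      apply kgcd_eq_pow_of hk hm' (one_dvd _) (by simpa using one_dvd _)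
      intro f hf hfk
      have hdfm : d * f ∣ m := (Nat.dvd_div_iff_mul_dvd hd).mp hf
      have hdfa : (d * f) ^ k ∣ a := by
        rw [mul_pow]
        exact (Nat.dvd_div_iff_mul_dvd hdvd).mp hfk
      have := hmax (d * f) hdfm hdfa
      have hdf : d * f ∣ d := this
      have : d * f ≤ d * 1 := by simpa using Nat.le_of_dvd hdpos hdf
      exact Nat.le_of_mul_le_mul_left this hdpos
  · intro b hbF
    rw [Finset.mem_coe, Finset.mem_filter, Finset.mem_Icc] at hbF
    obtain ⟨⟨h1b, hbm⟩, hgb⟩ := hbF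
    rw [← one_pow k] at hgb
    obtain ⟨-, hmax1⟩ := of_kgcd_eq_pow hk hm' h1b (one_dvd _) hgb
    rw [Finset.mem_coe, Finset.mem_filter, Finset.mem_Icc]
    refine ⟨⟨Nat.one_le_iff_ne_zero.mpr (by positivity), ?_⟩, ?_⟩
    · rw [hmk]
      exact Nat.mul_le_mul_left _ hbm
    · apply kgcd_eq_pow_of hk hm hd (dvd_mul_right _ _)
      intro e he hea
      have hepos : 0 < e := Nat.pos_of_dvd_of_pos he hm
      set f := Nat.lcm e d / d with hf
      have hdl : d ∣ Nat.lcm e d := Nat.dvd_lcm_right e d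
      have hlf : Nat.lcm e d = d * f := (Nat.mul_div_cancel' hdl).symm
      have hfm : f ∣ m / d := by
        rw [Nat.dvd_div_iff_mul_dvd hd, ← hlf]
        exact Nat.lcm_dvd he hd
      have hfb : f ^ k ∣ b := by
        have h1 : Nat.lcm e d ^ k ∣ d ^ k * b := by
          rw [← lcm_pow' k e d hk]
          exact Nat.lcm_dvd hea (dvd_mul_right _ _)
        rw [hlf, mul_pow] at h1
        exact (mul_dvd_mul_iff_left (show (d ^ k : ℕ) ≠ 0 from hdk.ne')).mp h1
      have hf1 : f = 1 := Nat.eq_one_of_dvd_one (hmax1 f hfm hfb)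
      have : Nat.lcm e d = d := by rw [hlf, hf1, mul_one]
      calc e ≤ Nat.lcm e d := Nat.le_of_dvd (Nat.lcm_pos hepos hdpos) (Nat.dvd_lcm_left e d)
        _ = d := this
  · intro a haF
    rw [Finset.mem_coe, Finset.mem_filter, Finset.mem_Icc] at haF
    obtain ⟨⟨h1a, _⟩, hg⟩ := haF
    exact Nat.mul_div_cancel' (of_kgcd_eq_pow hk hm h1a hd hg).1
  · intro b _
    exact Nat.mul_div_cancel_left _ hdk

/-- `P^(k)(m) = ∑_{d ∣ m} d^k · φ^(k)(m/d)`. -/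
theorem Pk_eq_sum_divisors (k m : ℕ) (hk : 0 < k) (hm : 0 < m) :
    Pk k m = ∑ d ∈ m.divisors, d ^ k * cohenTotient k (m / d) := by
  unfold Pk
  have key : ∀ a ∈ Finset.Icc 1 (m^k), kgcd k (a:ℤ) ((m:ℤ)^k)
      = ∑ d ∈ m.divisors, if kgcd k (a:ℤ) ((m:ℤ)^k) = d^k then d^k else 0 := by
    intro a haI
    rw [Finset.mem_Icc] at haI
    obtain ⟨d₀, hd₀m, hg⟩ := exists_root hk hm haI.1
    rw [Finset.sum_eq_single_of_mem d₀ hd₀m]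
    · rw [if_pos hg, hg]
    · intro d _ hne
      rw [if_neg]
      intro hgd
      have hpow : d ^ k = d₀ ^ k := by rw [← hgd, ← hg]
      exact hne (Nat.pow_left_injective hk.ne' hpow)
  calc ∑ a ∈ Finset.Icc 1 (m^k), kgcd k (a:ℤ) ((m:ℤ)^k)
      = ∑ a ∈ Finset.Icc 1 (m^k), ∑ d ∈ m.divisors,
          if kgcd k (a:ℤ) ((m:ℤ)^k) = d^k then d^k else 0 := Finset.sum_congr rfl key
    _ = ∑ d ∈ m.divisors, ∑ a ∈ Finset.Icc 1 (m^k),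
          if kgcd k (a:ℤ) ((m:ℤ)^k) = d^k then d^k else 0 := Finset.sum_comm
    _ = ∑ d ∈ m.divisors, d ^ k * cohenTotient k (m / d) := by
        apply Finset.sum_congr rfl
        intro d hdm
        rw [← Finset.sum_filter, Finset.sum_const, smul_eq_mul,
          fiber_card hk hm (Nat.mem_divisors.mp hdm).1, mul_comm]
end

section
/- For every positive integer k, every prime p, and every positive integer v, P^(k)(p^v) = (v+1)·p^{vk} - v·p^{(v-1)k}. -/
lemma kgcd_prime_pow (k : ℕ) (hk : 0 < k) (p : ℕ) (hp : p.Prime) (w : ℕ)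
    (a : ℕ) (ha : 0 < a) :
    kgcd k (a : ℤ) ((p ^ (w * k) : ℕ) : ℤ) =
      p ^ (min w (padicValNat p a / k) * k) := by
  haveI : Fact p.Prime := ⟨hp⟩
  set J := min w (padicValNat p a / k) with hJ
  apply le_antisymm
  · apply csSup_le
    · exact ⟨1, ⟨1, one_pos, (one_pow k).symm⟩, by simp⟩
    · rintro n ⟨⟨d, hd, rfl⟩, hda, hdb⟩
      -- d^k divides p^(w*k) in ℕ
      have hdb' : d ^ k ∣ p ^ (w * k) := by exact_mod_cast hdb
      have hda' : d ^ k ∣ a := by exact_mod_cast hda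
      have hd1 : d ∣ p ^ (w * k) := dvd_trans (dvd_pow_self d hk.ne') hdb'
      obtain ⟨j, hjle, rfl⟩ := (Nat.dvd_prime_pow hp).mp hd1
      have hp1 : 1 < p := hp.one_lt
      rw [← pow_mul] at hda' hdb' ⊢
      have hjw : j ≤ w := by
        have := (Nat.pow_dvd_pow_iff_le_right hp1).mp hdb'
        exact Nat.le_of_mul_le_mul_right this hk
      have hjv : j * k ≤ padicValNat p a := by
        rcases (padicValNat_dvd_iff (j * k) a).mp hda' with h | h
        · omega
        · exact h
      have hjdiv : j ≤ padicValNat p a / k := Nat.le_div_iff_mul_le hk |>.mpr hjv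
      exact Nat.pow_le_pow_right hp.pos (Nat.mul_le_mul_right k (le_min hjw hjdiv))
  · apply le_csSup
    · refine ⟨a, ?_⟩
      rintro n ⟨-, hda, -⟩
      have : n ∣ a := by exact_mod_cast hda
      exact Nat.le_of_dvd ha this
    · refine ⟨⟨p ^ J, pow_pos hp.pos J, by rw [← pow_mul]⟩, ?_, ?_⟩
      · have h1 : J * k ≤ padicValNat p a := by
          have : J ≤ padicValNat p a / k := min_le_right _ _
          exact Nat.le_div_iff_mul_le hk |>.mp this
        have : (p : ℕ) ^ (J * k) ∣ a :=
          dvd_trans (pow_dvd_pow p h1) (dvd_trans pow_padicValNat_dvd dvd_rfl)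
        exact_mod_cast this
      · have : (p : ℕ) ^ (J * k) ∣ p ^ (w * k) :=
          pow_dvd_pow p (Nat.mul_le_mul_right k (min_le_left _ _))
        exact_mod_cast this

/-- `P^(k)(p^v) = (v+1)·p^{vk} - v·p^{(v-1)k}` for a prime `p` and positive `k`, `v`. -/
theorem Pk_prime_pow (k : ℕ) (hk : 0 < k) (p : ℕ) (hp : p.Prime) (v : ℕ) (hv : 0 < v) :
    Pk k (p ^ v) = (v + 1) * p ^ (v * k) - v * p ^ ((v - 1) * k) := by
  haveI : Fact p.Prime := ⟨hp⟩
  have hp1 : 1 < p := hp.one_lt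
  have hcast : ((p ^ v : ℕ) : ℤ) ^ k = ((p ^ (v * k) : ℕ) : ℤ) := by
    push_cast
    rw [← pow_mul]
  have hmk : (p ^ v) ^ k = p ^ (v * k) := by rw [← pow_mul]
  rw [Pk]
  rw [hmk]
  -- rewrite each summand
  have hsum : ∀ a ∈ Finset.Icc 1 (p ^ (v * k)),
      kgcd k (a : ℤ) (((p ^ v : ℕ) : ℤ) ^ k) =
        p ^ (min v (padicValNat p a / k) * k) := by
    intro a ha
    rw [hcast]
    exact kgcd_prime_pow k hk p hp v a (Finset.mem_Icc.mp ha).1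
  rw [Finset.sum_congr rfl hsum]
  -- telescope each term
  have htel : ∀ a ∈ Finset.Icc 1 (p ^ (v * k)),
      p ^ (min v (padicValNat p a / k) * k) =
        1 + ∑ j ∈ Finset.range v,
          (if p ^ ((j + 1) * k) ∣ a then p ^ ((j + 1) * k) - p ^ (j * k) else 0) := by
    intro a ha
    have ha1 : 0 < a := (Finset.mem_Icc.mp ha).1
    set J := min v (padicValNat p a / k) with hJdef
    have hJv : J ≤ v := min_le_left _ _
    have hcond : ∀ j, j ∈ Finset.range v → ((p ^ ((j + 1) * k) ∣ a) ↔ j < J) := by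
      intro j hj
      rw [Finset.mem_range] at hj
      rw [padicValNat_dvd_iff]
      constructor
      · rintro (h | h)
        · omega
        · have : j + 1 ≤ padicValNat p a / k := Nat.le_div_iff_mul_le hk |>.mpr h
          omega
      · intro h
        right
        have : j + 1 ≤ J := h
        have : j + 1 ≤ padicValNat p a / k := le_trans this (min_le_right _ _)
        exact Nat.le_div_iff_mul_le hk |>.mp this
    have step1 : ∑ j ∈ Finset.range v,
        (if p ^ ((j + 1) * k) ∣ a then p ^ ((j + 1) * k) - p ^ (j * k) else 0) =
        ∑ j ∈ Finset.range v,
        (if j < J then p ^ ((j + 1) * k) - p ^ (j * k) else 0) := by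
      apply Finset.sum_congr rfl
      intro j hj
      simp only [hcond j hj]
    rw [step1]
    have step2 : ∑ j ∈ Finset.range v,
        (if j < J then p ^ ((j + 1) * k) - p ^ (j * k) else 0) =
        ∑ j ∈ Finset.range J, (p ^ ((j + 1) * k) - p ^ (j * k)) := by
      rw [← Finset.sum_filter]
      apply Finset.sum_congr
      · ext j
        simp only [Finset.mem_filter, Finset.mem_range]
        omega
      · intros; rfl
    rw [step2]
    have hmono : Monotone (fun j : ℕ => p ^ (j * k)) := by
      intro i j hij
      exact Nat.pow_le_pow_right hp.pos (Nat.mul_le_mul_right k hij)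
    rw [Finset.sum_range_tsub hmono]
    simp only [Nat.zero_mul, pow_zero]
    have : 1 ≤ p ^ (J * k) := Nat.one_le_pow _ _ hp.pos
    omega
  rw [Finset.sum_congr rfl htel]
  rw [Finset.sum_add_distrib, Finset.sum_const, Nat.card_Icc]
  rw [Finset.sum_comm]
  -- inner sums: count multiples
  have hcount : ∀ j ∈ Finset.range v,
      ∑ a ∈ Finset.Icc 1 (p ^ (v * k)),
        (if p ^ ((j + 1) * k) ∣ a then p ^ ((j + 1) * k) - p ^ (j * k) else 0) =
      p ^ (v * k) - p ^ ((v - 1) * k) := by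
    intro j hj
    rw [Finset.mem_range] at hj
    have : ∑ a ∈ Finset.Icc 1 (p ^ (v * k)),
        (if p ^ ((j + 1) * k) ∣ a then p ^ ((j + 1) * k) - p ^ (j * k) else 0) =
        (p ^ ((j + 1) * k) - p ^ (j * k)) *
          ((Finset.Icc 1 (p ^ (v * k))).filter (fun a => p ^ ((j + 1) * k) ∣ a)).card := by
      rw [← Finset.sum_filter, Finset.sum_const, smul_eq_mul, mul_comm]
    rw [this]
    have hIcc : Finset.Icc 1 (p ^ (v * k)) = Finset.Ioc 0 (p ^ (v * k)) := by
      rw [← Finset.Icc_add_one_left_eq_Ioc, zero_add]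
    rw [hIcc, Nat.Ioc_filter_dvd_card_eq_div]
    have hle : (j + 1) * k ≤ v * k := Nat.mul_le_mul_right k hj
    rw [Nat.pow_div hle hp.pos, ← Nat.sub_mul, Nat.sub_mul _ _ (p ^ ((v - (j + 1)) * k)),
      ← pow_add, ← pow_add, ← Nat.add_mul, ← Nat.add_mul]
    congr 3 <;> omega
  rw [Finset.sum_congr rfl hcount, Finset.sum_const, Finset.card_range, smul_eq_mul]
  have hBA : p ^ ((v - 1) * k) ≤ p ^ (v * k) :=
    Nat.pow_le_pow_right hp.pos (Nat.mul_le_mul_right k (by omega))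
  simp only [smul_eq_mul, mul_one, Nat.add_sub_cancel]
  have key : ∀ A B : ℕ, B ≤ A → A + v * (A - B) = (v + 1) * A - v * B := by
    intro A B h
    have h2 : v * B ≤ v * A := Nat.mul_le_mul_left v h
    have h3 : v * A ≤ (v + 1) * A := by nlinarith
    zify [h, h2, le_trans h2 h3]
    ring
  exact key _ _ hBA
end

section
/- Let k and m be positive integers, let A be a k-th power reduced set of residues modulo m, and let ℓ and s be integers with gcd(ℓ, m) = 1. Then ∑_{a ∈ A} (aℓ - s, m^k)_k = ∑_{a ∈ A} (a - s, m^k)_k. -/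
private lemma kgcd_congr_s12 (k : ℕ) {x y N : ℤ} (h : x ≡ y [ZMOD N]) :
    kgcd k x N = kgcd k y N := by
  have key : ∀ {u v : ℤ}, u ≡ v [ZMOD N] → ∀ n : ℕ, (n:ℤ) ∣ N → (n:ℤ) ∣ u → (n:ℤ) ∣ v := by
    intro u v huv n hN hu
    have h1 : (n:ℤ) ∣ v - u := dvd_trans hN huv.dvd
    simpa using dvd_add hu h1
  unfold kgcd
  congr 1
  ext n
  simp only [Set.mem_setOf_eq]
  exact ⟨fun ⟨hd, hx, hN⟩ => ⟨hd, key h n hN hx, hN⟩,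
    fun ⟨hd, hy, hN⟩ => ⟨hd, key h.symm n hN hy, hN⟩⟩

private lemma kgcd_mul_coprime (k : ℕ) (x ℓ N : ℤ) (h : IsCoprime ℓ N) :
    kgcd k (x * ℓ) N = kgcd k x N := by
  unfold kgcd
  congr 1
  ext n
  simp only [Set.mem_setOf_eq]
  constructor
  · rintro ⟨hd, hx, hN⟩
    have hcop : IsCoprime ((n:ℤ)) ℓ := (h.of_isCoprime_of_dvd_right hN).symm
    exact ⟨hd, hcop.dvd_of_dvd_mul_right hx, hN⟩
  · rintro ⟨hd, hx, hN⟩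
    exact ⟨hd, hx.mul_right ℓ, hN⟩

/-- If `A` is a k-th power reduced set of residues modulo `m` and `gcd(ℓ, m) = 1`,
then `∑_{a ∈ A} (aℓ - s, m^k)_k = ∑_{a ∈ A} (a - s, m^k)_k`. -/
theorem sum_kgcd_mul_shift (k m : ℕ) (hk : 0 < k) (hm : 0 < m) (A : Finset ℤ)
    (hA : IsKthPowerReducedResidueSet k m A) (ℓ s : ℤ) (hℓ : Int.gcd ℓ (m : ℤ) = 1) :
    ∑ a ∈ A, kgcd k (a * ℓ - s) ((m : ℤ) ^ k) =
      ∑ a ∈ A, kgcd k (a - s) ((m : ℤ) ^ k) := by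
  obtain ⟨hcard, hred, hinj⟩ := hA
  set N : ℕ := m ^ k with hNdef
  have hN0 : 0 < N := pow_pos hm k
  haveI : NeZero N := ⟨hN0.ne'⟩
  have hNZ : ((m:ℤ)^k) = (N : ℤ) := by push_cast [hNdef]; ring
  have hcopN : IsCoprime ℓ (N : ℤ) := by
    have h1 : IsCoprime ℓ (m : ℤ) := Int.isCoprime_iff_gcd_eq_one.mpr hℓ
    have := h1.pow_right (n := k)
    rwa [hNZ] at this
  -- basic congruence fact
  have hvalcong : ∀ x : ℤ, (((x : ZMod N)).val : ℤ) ≡ x [ZMOD (N:ℤ)] := by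
    intro x
    rw [← ZMod.intCast_eq_intCast_iff]
    push_cast
    rw [ZMod.natCast_val, ZMod.cast_id]
  -- class functions
  set K : ZMod N → ℕ := fun z => kgcd k ((z.val : ℤ) - s) (N : ℤ) with hK
  set K0 : ZMod N → ℕ := fun z => kgcd k ((z.val : ℤ)) (N : ℤ) with hK0
  have hKeq : ∀ x : ℤ, kgcd k (x - s) (N:ℤ) = K ((x : ZMod N)) := by
    intro x
    exact (kgcd_congr_s12 k ((hvalcong x).sub_right s)).symm
  have hK0eq : ∀ x : ℤ, kgcd k x (N:ℤ) = K0 ((x : ZMod N)) :=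
    fun x => (kgcd_congr_s12 k (hvalcong x)).symm
  classical
  -- the set of residue classes with K0 = 1
  set S : Finset (ZMod N) := Finset.univ.filter (fun z => K0 z = 1) with hS
  -- card S = cohenTotient k m
  have hcardS : S.card = cohenTotient k m := by
    rw [cohenTotient]
    refine Finset.card_nbij' (fun z : ZMod N => if z = 0 then N else z.val)
      (fun a : ℕ => ((a : ℕ) : ZMod N)) ?_ ?_ ?_ ?_
    · intro z hz
      beta_reduce
      simp only [hS, Finset.mem_coe, Finset.mem_filter, Finset.mem_univ, true_and] at hz
      by_cases h0 : z = 0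
      · rw [if_pos h0]
        simp only [Finset.mem_coe, Finset.mem_filter, Finset.mem_Icc]
        refine ⟨⟨hN0, le_refl N⟩, ?_⟩
        rw [hNZ]
        have h2 : kgcd k ((N:ℤ)) (N:ℤ) = K0 (0 : ZMod N) := by
          rw [hK0]
          exact kgcd_congr_s12 k (by simp [Int.ModEq])
        rw [h2, ← h0]
        exact hz
      · simp only [if_neg h0, Finset.mem_coe, Finset.mem_filter, Finset.mem_Icc]
        refine ⟨⟨?_, le_of_lt (ZMod.val_lt z)⟩, ?_⟩
        · exact Nat.one_le_iff_ne_zero.mpr (fun hv => h0 (by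
            have := ZMod.natCast_rightInverse (n := N) z
            rw [hv] at this; simpa using this.symm))
        · rw [hNZ]; exact hz
    · intro a ha
      beta_reduce
      simp only [Finset.mem_coe, Finset.mem_filter, Finset.mem_Icc] at ha
      simp only [hS, Finset.mem_coe, Finset.mem_filter, Finset.mem_univ, true_and]
      rw [← Int.cast_natCast (R := ZMod N), ← hK0eq]
      rw [hNZ] at ha
      exact_mod_cast ha.2
    · intro z hz
      dsimp only
      by_cases h0 : z = 0
      · simp [h0]
      · simp only [if_neg h0]
        exact ZMod.natCast_rightInverse z
    · intro a ha
      beta_reduce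
      simp only [Finset.mem_coe, Finset.mem_filter, Finset.mem_Icc] at ha
      by_cases h0 : ((a : ℕ) : ZMod N) = 0
      · simp only [if_pos h0]
        have hdvd : (N : ℕ) ∣ a := (ZMod.natCast_eq_zero_iff a N).mp h0
        have h1 : N ≤ a := Nat.le_of_dvd ha.1.1 hdvd
        have h2 : a ≤ N := by rw [hNdef]; exact ha.1.2
        omega
      · simp only [if_neg h0]
        have halt : a < N := by
          rcases Nat.lt_or_ge a N with h | h
          · exact h
          · exfalso; apply h0
            have : a = N := le_antisymm ha.1.2 h
            simp [this]
        rw [ZMod.val_natCast_of_lt halt]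
  -- A maps bijectively onto S
  have hAinj : ∀ a ∈ A, ∀ b ∈ A, ((a:ℤ) : ZMod N) = ((b:ℤ) : ZMod N) → a = b := by
    intro a ha b hb h
    rw [ZMod.intCast_eq_intCast_iff] at h
    exact hinj a ha b hb (by rwa [hNZ])
  set T : Finset (ZMod N) := A.image (fun a : ℤ => (a : ZMod N)) with hT
  have hTS : T = S := by
    apply Finset.eq_of_subset_of_card_le
    · intro z hz
      simp only [hT, Finset.mem_image] at hz
      obtain ⟨a, ha, rfl⟩ := hz
      simp only [hS, Finset.mem_filter, Finset.mem_univ, true_and]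
      rw [← hK0eq]
      have := hred a ha
      rwa [hNZ] at this
    · rw [hcardS, hT, Finset.card_image_of_injOn (fun a ha b hb => hAinj a ha b hb), hcard]
  -- multiplication by ℓ is a unit and permutes S
  have hunit : IsUnit ((ℓ : ZMod N)) := by
    obtain ⟨u, v, huv⟩ := hcopN
    refine IsUnit.of_mul_eq_one ((u : ZMod N)) ?_
    have : ((u * ℓ + v * N : ℤ) : ZMod N) = ((1:ℤ) : ZMod N) := by rw [huv]
    push_cast at this
    simpa [mul_comm] using this
  have hK0mul : ∀ z : ZMod N, K0 (z * (ℓ : ZMod N)) = K0 z := by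
    intro z
    have hz : z * (ℓ : ZMod N) = (((z.val : ℤ) * ℓ : ℤ) : ZMod N) := by
      push_cast
      rw [ZMod.natCast_val, ZMod.cast_id]
    rw [hz, ← hK0eq, kgcd_mul_coprime k _ _ _ hcopN, hK0eq,
      show (((z.val : ℤ)) : ZMod N) = z by
        push_cast; rw [ZMod.natCast_val, ZMod.cast_id]]
  have hmulinj : ∀ x ∈ S, ∀ y ∈ S, x * (ℓ : ZMod N) = y * (ℓ : ZMod N) → x = y := by
    intro x _ y _ h
    apply hunit.mul_left_cancel
    rwa [mul_comm (ℓ : ZMod N) x, mul_comm (ℓ : ZMod N) y]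
  have hSimg : S.image (fun z => z * (ℓ : ZMod N)) = S := by
    apply Finset.eq_of_subset_of_card_le
    · intro z hz
      simp only [Finset.mem_image] at hz
      obtain ⟨w, hw, rfl⟩ := hz
      simp only [hS, Finset.mem_filter, Finset.mem_univ, true_and] at hw ⊢
      rw [hK0mul]; exact hw
    · rw [Finset.card_image_of_injOn (fun a ha b hb => hmulinj a ha b hb)]
  -- put everything together
  have lhs_eq : ∑ a ∈ A, kgcd k (a * ℓ - s) ((m : ℤ) ^ k) = ∑ z ∈ S, K (z * (ℓ : ZMod N)) := by
    rw [← hTS, hT, Finset.sum_image (fun a ha b hb => hAinj a ha b hb)]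
    apply Finset.sum_congr rfl
    intro a _
    rw [hNZ, hKeq (a * ℓ)]
    congr 1
    push_cast
    ring
  have rhs_eq : ∑ a ∈ A, kgcd k (a - s) ((m : ℤ) ^ k) = ∑ z ∈ S, K z := by
    rw [← hTS, hT, Finset.sum_image (fun a ha b hb => hAinj a ha b hb)]
    apply Finset.sum_congr rfl
    intro a _
    rw [hNZ, hKeq a]
  rw [lhs_eq, rhs_eq]
  calc ∑ z ∈ S, K (z * (ℓ : ZMod N))
      = ∑ w ∈ S.image (fun z => z * (ℓ : ZMod N)), K w :=
        (Finset.sum_image (fun a ha b hb => hmulinj a ha b hb)).symm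
    _ = ∑ z ∈ S, K z := by rw [hSimg]
end

section
/- For every integer s and every positive integer k, the arithmetic function M_s^(k) is multiplicative: if m₁ and m₂ are relatively prime positive integers, then M_s^(k)(m₁m₂) = M_s^(k)(m₁)·M_s^(k)(m₂). -/
/-- `M_s^(k)(m) = ∑ (a - s, m^k)_k`, the sum over `1 ≤ a ≤ m^k` with `(a, m^k)_k = 1`. -/
noncomputable def Msk (s : ℤ) (k m : ℕ) : ℕ :=
  ∑ a ∈ (Finset.Icc 1 (m ^ k)).filter (fun a : ℕ => kgcd k (a : ℤ) ((m : ℤ) ^ k) = 1),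
    kgcd k ((a : ℤ) - s) ((m : ℤ) ^ k)

namespace MskAux

lemma one_mem (k : ℕ) (a b : ℤ) :
    1 ∈ {n : ℕ | (∃ d : ℕ, 0 < d ∧ n = d ^ k) ∧ (n : ℤ) ∣ a ∧ (n : ℤ) ∣ b} :=
  ⟨⟨1, one_pos, (one_pow k).symm⟩, one_dvd _, one_dvd _⟩

lemma bdd {k : ℕ} {a b : ℤ} (hb : b ≠ 0) :
    BddAbove {n : ℕ | (∃ d : ℕ, 0 < d ∧ n = d ^ k) ∧ (n : ℤ) ∣ a ∧ (n : ℤ) ∣ b} := by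
  refine ⟨b.natAbs, fun n hn => ?_⟩
  exact Nat.le_of_dvd (Int.natAbs_pos.mpr hb)
    (Int.natCast_dvd_natCast.mp (Int.dvd_natAbs.mpr hn.2.2))

lemma kgcd_mem {k : ℕ} {a b : ℤ} (hb : b ≠ 0) :
    kgcd k a b ∈ {n : ℕ | (∃ d : ℕ, 0 < d ∧ n = d ^ k) ∧ (n : ℤ) ∣ a ∧ (n : ℤ) ∣ b} :=
  Nat.sSup_mem ⟨1, one_mem k a b⟩ (bdd hb)

lemma le_kgcd {k n : ℕ} {a b : ℤ} (hb : b ≠ 0)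
    (hn : n ∈ {n : ℕ | (∃ d : ℕ, 0 < d ∧ n = d ^ k) ∧ (n : ℤ) ∣ a ∧ (n : ℤ) ∣ b}) :
    n ≤ kgcd k a b := le_csSup (bdd hb) hn

/-- `kgcd` only depends on `a` modulo `b`. -/
lemma kgcd_congr {k : ℕ} {a a' b : ℤ} (h : b ∣ a - a') : kgcd k a b = kgcd k a' b := by
  unfold kgcd
  congr 1
  ext n
  simp only [Set.mem_setOf_eq]
  refine ⟨fun ⟨h1, h2, h3⟩ => ⟨h1, ?_, h3⟩, fun ⟨h1, h2, h3⟩ => ⟨h1, ?_, h3⟩⟩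
  · have := dvd_sub h2 (h3.trans h)
    simpa using this
  · have := dvd_add h2 (h3.trans h)
    simpa using this

/-- Multiplicativity of `kgcd` in the modulus, for coprime moduli. -/
lemma kgcd_mul {k : ℕ} (hk : 0 < k) (a : ℤ) (m₁ m₂ : ℕ) (hm₁ : 0 < m₁) (hm₂ : 0 < m₂)
    (h : Nat.Coprime m₁ m₂) :
    kgcd k a ((m₁ : ℤ) ^ k * (m₂ : ℤ) ^ k) = kgcd k a ((m₁ : ℤ) ^ k) * kgcd k a ((m₂ : ℤ) ^ k) := by
  have hM₁ : ((m₁ : ℤ) ^ k) ≠ 0 := pow_ne_zero _ (by exact_mod_cast hm₁.ne')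
  have hM₂ : ((m₂ : ℤ) ^ k) ≠ 0 := pow_ne_zero _ (by exact_mod_cast hm₂.ne')
  have hM : ((m₁ : ℤ) ^ k * (m₂ : ℤ) ^ k) ≠ 0 := mul_ne_zero hM₁ hM₂
  -- extract data of the three kgcds
  obtain ⟨⟨d, hd, hdeq⟩, hda, hdb⟩ := kgcd_mem (k := k) (a := a) hM
  obtain ⟨⟨e₁, he₁, he₁eq⟩, he₁a, he₁b⟩ := kgcd_mem (k := k) (a := a) hM₁
  obtain ⟨⟨e₂, he₂, he₂eq⟩, he₂a, he₂b⟩ := kgcd_mem (k := k) (a := a) hM₂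
  apply le_antisymm
  · -- d ∣ m₁ * m₂, split
    have hdm : d ∣ m₁ * m₂ := by
      rw [← Nat.pow_dvd_pow_iff hk.ne']
      have : ((d ^ k : ℕ) : ℤ) ∣ ((m₁ * m₂ : ℕ) : ℤ) ^ k := by
        push_cast
        rw [mul_pow]
        exact_mod_cast hdeq ▸ hdb
      rw [← Nat.cast_pow] at this
      exact_mod_cast this
    obtain ⟨d₁, d₂, hd₁, hd₂, hdd⟩ := exists_dvd_and_dvd_of_dvd_mul hdm
    have hd₁pos : 0 < d₁ := Nat.pos_of_ne_zero (by rintro rfl; simp at hdd; omega)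
    have hd₂pos : 0 < d₂ := Nat.pos_of_ne_zero (by rintro rfl; simp at hdd; omega)
    have hd₁a : ((d₁ ^ k : ℕ) : ℤ) ∣ a := by
      refine dvd_trans ?_ (hdeq ▸ hda)
      exact_mod_cast Nat.cast_dvd_cast (pow_dvd_pow_of_dvd ⟨d₂, hdd⟩ k)
    have hd₂a : ((d₂ ^ k : ℕ) : ℤ) ∣ a := by
      refine dvd_trans ?_ (hdeq ▸ hda)
      exact_mod_cast Nat.cast_dvd_cast (pow_dvd_pow_of_dvd ⟨d₁, by rw [hdd, mul_comm]⟩ k)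
    have h1 : d₁ ^ k ≤ kgcd k a ((m₁ : ℤ) ^ k) := by
      apply le_kgcd hM₁
      refine ⟨⟨d₁, hd₁pos, rfl⟩, hd₁a, ?_⟩
      exact_mod_cast Nat.cast_dvd_cast (α := ℤ) (pow_dvd_pow_of_dvd hd₁ k)
    have h2 : d₂ ^ k ≤ kgcd k a ((m₂ : ℤ) ^ k) := by
      apply le_kgcd hM₂
      refine ⟨⟨d₂, hd₂pos, rfl⟩, hd₂a, ?_⟩
      exact_mod_cast Nat.cast_dvd_cast (α := ℤ) (pow_dvd_pow_of_dvd hd₂ k)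
    calc kgcd k a ((m₁:ℤ)^k * (m₂:ℤ)^k) = d ^ k := hdeq
      _ = d₁ ^ k * d₂ ^ k := by rw [hdd, mul_pow]
      _ ≤ _ := Nat.mul_le_mul h1 h2
  · -- e₁ ∣ m₁, e₂ ∣ m₂
    have he₁m : e₁ ∣ m₁ := by
      rw [← Nat.pow_dvd_pow_iff hk.ne']
      have : ((e₁ ^ k : ℕ) : ℤ) ∣ ((m₁ ^ k : ℕ) : ℤ) := by rw [← he₁eq]; push_cast; exact he₁b
      exact_mod_cast this
    have he₂m : e₂ ∣ m₂ := by
      rw [← Nat.pow_dvd_pow_iff hk.ne']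
      have : ((e₂ ^ k : ℕ) : ℤ) ∣ ((m₂ ^ k : ℕ) : ℤ) := by rw [← he₂eq]; push_cast; exact he₂b
      exact_mod_cast this
    have hco : Nat.Coprime (e₁ ^ k) (e₂ ^ k) :=
      Nat.Coprime.pow k k ((h.coprime_dvd_left he₁m).coprime_dvd_right he₂m)
    have hcoZ : IsCoprime ((e₁ ^ k : ℕ) : ℤ) ((e₂ ^ k : ℕ) : ℤ) :=
      Nat.isCoprime_iff_coprime.mpr hco
    apply le_kgcd hM
    refine ⟨⟨e₁ * e₂, Nat.mul_pos he₁ he₂, by rw [mul_pow, he₁eq, he₂eq]⟩, ?_, ?_⟩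
    · have ha1 : ((e₁ ^ k : ℕ) : ℤ) ∣ a := by rw [← he₁eq]; exact he₁a
      have ha2 : ((e₂ ^ k : ℕ) : ℤ) ∣ a := by rw [← he₂eq]; exact he₂a
      have := hcoZ.mul_dvd ha1 ha2
      rw [he₁eq, he₂eq]
      push_cast at this ⊢
      exact this
    · have hb1 : ((e₁ ^ k : ℕ) : ℤ) ∣ (m₁ : ℤ) ^ k := by rw [← he₁eq]; exact he₁b
      have hb2 : ((e₂ ^ k : ℕ) : ℤ) ∣ (m₂ : ℤ) ^ k := by rw [← he₂eq]; exact he₂b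
      rw [he₁eq, he₂eq]
      push_cast at hb1 hb2 ⊢
      exact mul_dvd_mul hb1 hb2

/-- The summand as a function on ℕ. -/
noncomputable def F (s : ℤ) (k m : ℕ) (a : ℕ) : ℕ :=
  if kgcd k (a : ℤ) ((m : ℤ) ^ k) = 1 then kgcd k ((a : ℤ) - s) ((m : ℤ) ^ k) else 0

lemma F_congr (s : ℤ) (k m : ℕ) {a b : ℕ} (hab : a ≡ b [MOD m ^ k]) :
    F s k m a = F s k m b := by
  have hdvd : ((m : ℤ) ^ k) ∣ (a : ℤ) - (b : ℤ) := by
    have := hab.dvd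
    push_cast at this
    exact dvd_sub_comm.mp this
  have h1 : kgcd k (a : ℤ) ((m:ℤ)^k) = kgcd k (b : ℤ) ((m:ℤ)^k) := kgcd_congr hdvd
  have h2 : kgcd k ((a : ℤ) - s) ((m:ℤ)^k) = kgcd k ((b : ℤ) - s) ((m:ℤ)^k) :=
    kgcd_congr (by simpa using hdvd)
  unfold F
  rw [h1, h2]

/-- `Msk` as a sum of `F` over `range (m^k)`. -/
lemma Msk_eq (s : ℤ) (k m : ℕ) (hm : 0 < m) :
    Msk s k m = ∑ a ∈ Finset.range (m ^ k), F s k m a := by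
  have hN : 0 < m ^ k := pow_pos hm k
  have h1 : Msk s k m = ∑ a ∈ Finset.Icc 1 (m ^ k), F s k m a := by
    unfold Msk F
    rw [Finset.sum_filter]
  rw [h1]
  have h2 : Finset.Icc 1 (m ^ k) = Finset.Ico 1 (m ^ k + 1) := by
    rw [Finset.Ico_add_one_right_eq_Icc]
  rw [h2, Finset.sum_Ico_succ_top hN (F s k m), Finset.range_eq_Ico,
    Finset.sum_eq_sum_Ico_succ_bot hN (F s k m)]
  have h3 : F s k m (m ^ k) = F s k m 0 := F_congr s k m (by
    show m ^ k % m ^ k = 0 % m ^ k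
    simp)
  simp only [Nat.succ_eq_add_one, zero_add]
  omega

lemma F_mod (s : ℤ) (k m : ℕ) (a : ℕ) : F s k m a = F s k m (a % m ^ k) :=
  F_congr s k m (Nat.mod_modEq a (m ^ k)).symm

lemma F_mul (s : ℤ) {k : ℕ} (hk : 0 < k) (m₁ m₂ : ℕ) (hm₁ : 0 < m₁) (hm₂ : 0 < m₂)
    (h : Nat.Coprime m₁ m₂) (a : ℕ) :
    F s k (m₁ * m₂) a = F s k m₁ a * F s k m₂ a := by
  unfold F
  have hc : ((m₁ * m₂ : ℕ) : ℤ) ^ k = (m₁ : ℤ) ^ k * (m₂ : ℤ) ^ k := by push_cast; ring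
  rw [hc, kgcd_mul hk _ m₁ m₂ hm₁ hm₂ h, kgcd_mul hk _ m₁ m₂ hm₁ hm₂ h]
  by_cases h1 : kgcd k (a : ℤ) ((m₁ : ℤ) ^ k) = 1 <;>
    by_cases h2 : kgcd k (a : ℤ) ((m₂ : ℤ) ^ k) = 1 <;>
    simp [h1, h2, mul_eq_one]

end MskAux

open MskAux in
/-- The arithmetic function `m ↦ M_s^(k)(m)` is multiplicative. -/
theorem Msk_multiplicative (s : ℤ) (k : ℕ) (hk : 0 < k) (m₁ m₂ : ℕ)
    (hm₁ : 0 < m₁) (hm₂ : 0 < m₂) (h : Nat.Coprime m₁ m₂) :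
    Msk s k (m₁ * m₂) = Msk s k m₁ * Msk s k m₂ := by
  have hN₁ : 0 < m₁ ^ k := pow_pos hm₁ k
  have hN₂ : 0 < m₂ ^ k := pow_pos hm₂ k
  have hNco : Nat.Coprime (m₁ ^ k) (m₂ ^ k) := Nat.Coprime.pow k k h
  rw [Msk_eq s k (m₁ * m₂) (Nat.mul_pos hm₁ hm₂), Msk_eq s k m₁ hm₁, Msk_eq s k m₂ hm₂,
    mul_pow]
  have step1 : ∑ a ∈ Finset.range (m₁ ^ k * m₂ ^ k), F s k (m₁ * m₂) a
      = ∑ a ∈ Finset.range (m₁ ^ k * m₂ ^ k),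
          F s k m₁ (a % m₁ ^ k) * F s k m₂ (a % m₂ ^ k) := by
    refine Finset.sum_congr rfl fun a _ => ?_
    rw [F_mul s hk m₁ m₂ hm₁ hm₂ h a, ← F_mod, ← F_mod]
  rw [step1]
  have step2 : ∑ a ∈ Finset.range (m₁ ^ k * m₂ ^ k),
          F s k m₁ (a % m₁ ^ k) * F s k m₂ (a % m₂ ^ k)
      = ∑ p ∈ Finset.range (m₁ ^ k) ×ˢ Finset.range (m₂ ^ k),
          F s k m₁ p.1 * F s k m₂ p.2 := by
    refine Finset.sum_nbij' (i := fun a => (a % m₁ ^ k, a % m₂ ^ k))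
      (j := fun p => (Nat.chineseRemainder hNco p.1 p.2 : ℕ) % (m₁ ^ k * m₂ ^ k))
      ?_ ?_ ?_ ?_ ?_
    · intro a _
      simp [Finset.mem_product, Nat.mod_lt _ hN₁, Nat.mod_lt _ hN₂]
    · intro p _
      simp [Nat.mod_lt _ (Nat.mul_pos hN₁ hN₂)]
    · intro a ha
      simp only [Finset.mem_range] at ha
      set c := (Nat.chineseRemainder hNco (a % m₁ ^ k) (a % m₂ ^ k) : ℕ) with hc
      have h1 : c ≡ a [MOD m₁ ^ k] :=
        (Nat.chineseRemainder hNco (a % m₁ ^ k) (a % m₂ ^ k)).2.1.trans (Nat.mod_modEq a _)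
      have h2 : c ≡ a [MOD m₂ ^ k] :=
        (Nat.chineseRemainder hNco (a % m₁ ^ k) (a % m₂ ^ k)).2.2.trans (Nat.mod_modEq a _)
      have h3 : c ≡ a [MOD m₁ ^ k * m₂ ^ k] :=
        (Nat.modEq_and_modEq_iff_modEq_mul hNco).mp ⟨h1, h2⟩
      show c % (m₁ ^ k * m₂ ^ k) = a
      calc c % (m₁ ^ k * m₂ ^ k) = a % (m₁ ^ k * m₂ ^ k) := h3
        _ = a := Nat.mod_eq_of_lt ha
    · intro p hp
      simp only [Finset.mem_product, Finset.mem_range] at hp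
      set c := (Nat.chineseRemainder hNco p.1 p.2 : ℕ) with hc
      have h1 : c % (m₁ ^ k * m₂ ^ k) % m₁ ^ k = p.1 := by
        rw [Nat.mod_mod_of_dvd c (dvd_mul_right _ _)]
        calc c % m₁ ^ k = p.1 % m₁ ^ k := (Nat.chineseRemainder hNco p.1 p.2).2.1
          _ = p.1 := Nat.mod_eq_of_lt hp.1
      have h2 : c % (m₁ ^ k * m₂ ^ k) % m₂ ^ k = p.2 := by
        rw [Nat.mod_mod_of_dvd c (dvd_mul_left _ _)]
        calc c % m₂ ^ k = p.2 % m₂ ^ k := (Nat.chineseRemainder hNco p.1 p.2).2.2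
          _ = p.2 := Nat.mod_eq_of_lt hp.2
      exact Prod.ext h1 h2
    · intro a _
      rfl
  rw [step2, Finset.sum_product, ← Finset.sum_mul_sum]
end

section
/- For every integer s, every positive integer k, every prime p, and every positive integer v, M_s^(k)(p^v) = d_s^(k)(p^v)·φ^(k)(p^v); that is, M_s^(k)(p^v) = p^{vk} - p^{(v-1)k} if p^k divides s, and M_s^(k)(p^v) = (v+1)·(p^{vk} - p^{(v-1)k}) if p^k does not divide s. -/
open Finset

/-- `d_s^(k)` evaluated at the prime power `p^v`: `1` if `p^k ∣ s`, else `v + 1`. -/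
noncomputable def dskPrimePow (s : ℤ) (k v : ℕ) (p : ℕ) : ℕ :=
  if (p : ℤ) ^ k ∣ s then 1 else v + 1

lemma kgcd_set_mem_iff (k : ℕ) (hk : 0 < k) (p : ℕ) (hp : p.Prime) (v : ℕ) (a : ℤ) (n : ℕ) :
    n ∈ {n : ℕ | (∃ d : ℕ, 0 < d ∧ n = d ^ k) ∧ (n : ℤ) ∣ a ∧ (n : ℤ) ∣ (p : ℤ) ^ (v * k)} ↔
      ∃ j, j ≤ v ∧ n = p ^ (j * k) ∧ (p : ℤ) ^ (j * k) ∣ a := by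
  constructor
  · rintro ⟨⟨d, hd, rfl⟩, hda, hdv⟩
    have hcast : ((p ^ (v * k) : ℕ) : ℤ) = (p : ℤ) ^ (v * k) := by push_cast; ring
    have h1 : (d ^ k : ℕ) ∣ p ^ (v * k) := by
      rw [← Int.natCast_dvd_natCast, hcast]; exact_mod_cast hdv
    have h2 : d ∣ p ^ v := by
      rw [← Nat.pow_dvd_pow_iff hk.ne']
      simpa [← pow_mul] using h1
    obtain ⟨j, hjv, rfl⟩ := (Nat.dvd_prime_pow hp).mp h2
    refine ⟨j, hjv, by rw [← pow_mul], ?_⟩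
    have : ((p ^ (j * k) : ℕ) : ℤ) ∣ a := by
      convert hda using 2
      rw [← pow_mul]
    simpa using this
  · rintro ⟨j, hjv, rfl, hdvd⟩
    refine ⟨⟨p ^ j, pow_pos hp.pos j, by rw [← pow_mul]⟩, by simpa using hdvd, ?_⟩
    have : ((p ^ (j * k) : ℕ) : ℤ) ∣ ((p ^ (v * k) : ℕ) : ℤ) := by
      exact_mod_cast pow_dvd_pow p (Nat.mul_le_mul_right k hjv)
    simpa using this

lemma kgcd_ppow (k : ℕ) (hk : 0 < k) (p : ℕ) (hp : p.Prime) (v : ℕ) (a : ℤ) (j : ℕ)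
    (hjv : j ≤ v) (hdvd : (p : ℤ) ^ (j * k) ∣ a)
    (hmax : ∀ i, i ≤ v → (p : ℤ) ^ (i * k) ∣ a → i ≤ j) :
    kgcd k a ((p : ℤ) ^ (v * k)) = p ^ (j * k) := by
  have hmem : p ^ (j * k) ∈
      {n : ℕ | (∃ d : ℕ, 0 < d ∧ n = d ^ k) ∧ (n : ℤ) ∣ a ∧ (n : ℤ) ∣ (p : ℤ) ^ (v * k)} :=
    (kgcd_set_mem_iff k hk p hp v a _).mpr ⟨j, hjv, rfl, hdvd⟩
  apply le_antisymm
  · apply csSup_le ⟨_, hmem⟩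
    intro n hn
    obtain ⟨i, hiv, rfl, hia⟩ := (kgcd_set_mem_iff k hk p hp v a n).mp hn
    exact Nat.pow_le_pow_right hp.pos (Nat.mul_le_mul_right k (hmax i hiv hia))
  · apply le_csSup _ hmem
    refine ⟨p ^ (v * k), fun n hn => ?_⟩
    obtain ⟨i, hiv, rfl, -⟩ := (kgcd_set_mem_iff k hk p hp v a n).mp hn
    exact Nat.pow_le_pow_right hp.pos (Nat.mul_le_mul_right k hiv)

open Classical in
lemma kgcd_eq_findGreatest (k : ℕ) (hk : 0 < k) (p : ℕ) (hp : p.Prime) (v : ℕ) (a : ℤ) :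
    kgcd k a ((p : ℤ) ^ (v * k)) =
      p ^ (Nat.findGreatest (fun j => (p : ℤ) ^ (j * k) ∣ a) v * k) := by
  apply kgcd_ppow k hk p hp v a _ (Nat.findGreatest_le v)
  · exact Nat.findGreatest_spec (P := fun j => (p : ℤ) ^ (j * k) ∣ a) (Nat.zero_le v) (by simp)
  · intro i hiv hia
    exact Nat.le_findGreatest hiv hia

lemma kgcd_eq_one_iff_s15 (k : ℕ) (hk : 0 < k) (p : ℕ) (hp : p.Prime) (v : ℕ) (hv : 0 < v) (a : ℤ) :
    kgcd k a ((p : ℤ) ^ (v * k)) = 1 ↔ ¬ (p : ℤ) ^ k ∣ a := by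
  classical
  rw [kgcd_eq_findGreatest k hk p hp v a]
  set J := Nat.findGreatest (fun j => (p : ℤ) ^ (j * k) ∣ a) v with hJ
  constructor
  · intro h1 hdvd
    have hJ1 : 1 ≤ J := Nat.le_findGreatest hv (by simpa using hdvd)
    have : p ^ (J * k) ≥ p ^ (1 * k) := Nat.pow_le_pow_right hp.pos (Nat.mul_le_mul_right k hJ1)
    have h2 : 2 ≤ p ^ (1 * k) := by
      calc 2 ≤ p := hp.two_le
      _ = p ^ 1 := (pow_one p).symm
      _ ≤ p ^ (1 * k) := Nat.pow_le_pow_right hp.pos (by omega)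
    omega
  · intro hnd
    have hJ0 : J = 0 := by
      by_contra h
      have hspec : (p : ℤ) ^ (J * k) ∣ a :=
        Nat.findGreatest_spec (P := fun j => (p : ℤ) ^ (j * k) ∣ a) (Nat.zero_le v) (by simp)
      exact hnd (dvd_trans (pow_dvd_pow _ (Nat.le_mul_of_pos_left k (by omega : 0 < J))) hspec)
    rw [hJ0]; simp

lemma telescope_sum (p k : ℕ) (hp : 1 ≤ p) : ∀ J : ℕ,
    ∑ j ∈ Finset.range (J + 1), (if j = 0 then 1 else p ^ (j * k) - p ^ ((j - 1) * k)) =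
      p ^ (J * k)
  | 0 => by simp
  | (J + 1) => by
    rw [Finset.sum_range_succ, telescope_sum p k hp J]
    have h1 : p ^ (J * k) ≤ p ^ ((J + 1) * k) :=
      Nat.pow_le_pow_right (by omega) (Nat.mul_le_mul_right k (by omega))
    simp only [Nat.add_sub_cancel, if_neg (Nat.succ_ne_zero J)]
    omega

open Classical in
lemma kgcd_expand (k : ℕ) (hk : 0 < k) (p : ℕ) (hp : p.Prime) (v : ℕ) (a : ℤ) :
    kgcd k a ((p : ℤ) ^ (v * k)) =
      ∑ j ∈ Finset.range (v + 1),
        (if (p : ℤ) ^ (j * k) ∣ a then (if j = 0 then 1 else p ^ (j * k) - p ^ ((j - 1) * k))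
          else 0) := by
  rw [kgcd_eq_findGreatest k hk p hp v a]
  set J := Nat.findGreatest (fun j => (p : ℤ) ^ (j * k) ∣ a) v with hJdef
  have hJv : J ≤ v := Nat.findGreatest_le v
  have hJspec : (p : ℤ) ^ (J * k) ∣ a :=
    Nat.findGreatest_spec (P := fun j => (p : ℤ) ^ (j * k) ∣ a) (Nat.zero_le v) (by simp)
  have hiff : ∀ j ∈ Finset.range (v + 1), ((p : ℤ) ^ (j * k) ∣ a ↔ j ≤ J) := by
    intro j hj
    rw [Finset.mem_range] at hj
    constructor
    · intro h
      exact Nat.le_findGreatest (by omega) h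
    · intro h
      exact dvd_trans (pow_dvd_pow _ (Nat.mul_le_mul_right k h)) hJspec
  symm
  calc ∑ j ∈ Finset.range (v + 1),
        (if (p : ℤ) ^ (j * k) ∣ a then (if j = 0 then 1 else p ^ (j * k) - p ^ ((j - 1) * k))
          else 0)
      = ∑ j ∈ Finset.range (v + 1),
        (if j ≤ J then (if j = 0 then 1 else p ^ (j * k) - p ^ ((j - 1) * k)) else 0) := by
        apply Finset.sum_congr rfl
        intro j hj
        rw [if_congr (hiff j hj) rfl rfl]
    _ = ∑ j ∈ (Finset.range (v + 1)).filter (fun j => j ≤ J),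
        (if j = 0 then 1 else p ^ (j * k) - p ^ ((j - 1) * k)) := (Finset.sum_filter _ _).symm
    _ = ∑ j ∈ Finset.range (J + 1),
        (if j = 0 then 1 else p ^ (j * k) - p ^ ((j - 1) * k)) := by
        congr 1
        ext j
        simp only [Finset.mem_filter, Finset.mem_range]
        omega
    _ = p ^ (J * k) := telescope_sum p k hp.one_lt.le J

lemma count_cong (N q : ℕ) (hq : 0 < q) (hqN : q ∣ N) (t : ℤ) :
    ((Finset.Ioc 0 N).filter (fun a : ℕ => (q : ℤ) ∣ (a : ℤ) - t)).card = N / q := by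
  classical
  obtain ⟨c, rfl⟩ := hqN
  set r : ℕ := (t % q).toNat with hrdef
  have hq' : (q : ℤ) ≠ 0 := by exact_mod_cast hq.ne'
  have hteq : (r : ℤ) = t % q := Int.toNat_of_nonneg (Int.emod_nonneg t hq')
  have hcond : ∀ a : ℕ, ((q : ℤ) ∣ (a : ℤ) - t) ↔ a ≡ r [MOD q] := by
    intro a
    rw [← Int.natCast_modEq_iff]
    have h2 : (r : ℤ) ≡ t [ZMOD q] := by
      rw [hteq]; exact Int.emod_emod_of_dvd t dvd_rfl
    constructor
    · intro h
      exact (h2.trans (Int.modEq_iff_dvd.mpr h)).symm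
    · intro h
      exact Int.modEq_iff_dvd.mp (h2.symm.trans h.symm)
  have hfc : ((Finset.Ioc 0 (q * c)).filter (fun a : ℕ => (q : ℤ) ∣ (a : ℤ) - t)) =
      ((Finset.Ioc 0 (q * c)).filter (fun a : ℕ => a ≡ r [MOD q])) := by
    apply Finset.filter_congr; intro a _; simp [hcond a]
  rw [hfc]
  have hcard := Nat.Ioc_filter_modEq_card 0 (q * c) hq r
  have hfloor : (⌊((q * c : ℕ) - (r : ℕ) : ℚ) / (q : ℚ)⌋ - ⌊((0 : ℕ) - (r : ℕ) : ℚ) / (q : ℚ)⌋)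
      = (c : ℤ) := by
    have hqQ : (q : ℚ) ≠ 0 := by exact_mod_cast hq.ne'
    have : ((q * c : ℕ) - (r : ℕ) : ℚ) / (q : ℚ) = ((0 : ℕ) - (r : ℕ) : ℚ) / (q : ℚ) + (c : ℤ) := by
      push_cast
      field_simp
      ring
    rw [this, Int.floor_add_intCast]
    ring
  rw [hfloor] at hcard
  have : ((Finset.Ioc 0 (q * c)).filter (fun a : ℕ => a ≡ r [MOD q])).card = c := by
    rw [max_eq_left (by positivity)] at hcard
    exact_mod_cast hcard
  rw [this, Nat.mul_div_cancel_left c hq]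

/-- `M_s^(k)(p^v) = d_s^(k)(p^v)·φ^(k)(p^v)`; explicitly, `M_s^(k)(p^v) = p^{vk} - p^{(v-1)k}`
if `p^k ∣ s`, and `M_s^(k)(p^v) = (v+1)·(p^{vk} - p^{(v-1)k})` otherwise. -/
theorem Msk_prime_pow (s : ℤ) (k : ℕ) (hk : 0 < k) (p : ℕ) (hp : p.Prime)
    (v : ℕ) (hv : 0 < v) :
    Msk s k (p ^ v) = dskPrimePow s k v p * cohenTotient k (p ^ v) ∧
      ((p : ℤ) ^ k ∣ s → Msk s k (p ^ v) = p ^ (v * k) - p ^ ((v - 1) * k)) ∧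
      (¬ (p : ℤ) ^ k ∣ s → Msk s k (p ^ v) = (v + 1) * (p ^ (v * k) - p ^ ((v - 1) * k))) := by
  have hcast : (((p ^ v : ℕ) : ℤ)) ^ k = (p : ℤ) ^ (v * k) := by push_cast; rw [← pow_mul]
  have hpk : (p ^ v) ^ k = p ^ (v * k) := by rw [← pow_mul]
  have hIoc : Finset.Icc 1 (p ^ (v * k)) = Finset.Ioc 0 (p ^ (v * k)) := by
    ext x; simp only [Finset.mem_Icc, Finset.mem_Ioc]; omega
  set F : Finset ℕ := (Finset.Ioc 0 (p ^ (v * k))).filter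
    (fun a : ℕ => ¬ (p : ℤ) ^ k ∣ (a : ℤ)) with hFdef
  have hFeq : ((Finset.Icc 1 ((p ^ v) ^ k)).filter
      (fun a : ℕ => kgcd k (a : ℤ) (((p ^ v : ℕ) : ℤ) ^ k) = 1)) = F := by
    rw [hpk, hIoc, hFdef]
    apply Finset.filter_congr
    intro a _
    rw [hcast, kgcd_eq_one_iff_s15 k hk p hp v hv]
  have hk_le : k ≤ v * k := Nat.le_mul_of_pos_left k hv
  have hdiv1 : p ^ (v * k) / p ^ k = p ^ ((v - 1) * k) := by
    rw [Nat.pow_div hk_le hp.pos, Nat.sub_one_mul]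
  have hφ : F.card = p ^ (v * k) - p ^ ((v - 1) * k) := by
    have h1 : F = (Finset.Ioc 0 (p ^ (v * k))) \ ((Finset.Ioc 0 (p ^ (v * k))).filter (fun a : ℕ => p ^ k ∣ a)) := by
      rw [← Finset.filter_not, hFdef]
      apply Finset.filter_congr
      intro a _
      rw [show ((p : ℤ)) ^ k = ((p ^ k : ℕ) : ℤ) by push_cast; ring, Int.natCast_dvd_natCast]
    rw [h1, Finset.card_sdiff_of_subset (Finset.filter_subset _ _), Nat.Ioc_filter_dvd_card_eq_div,
      Nat.card_Ioc, hdiv1, Nat.sub_zero]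
  have hMsk : Msk s k (p ^ v) = ∑ a ∈ F, kgcd k ((a : ℤ) - s) ((p : ℤ) ^ (v * k)) := by
    rw [Msk, hFeq]
    exact Finset.sum_congr rfl (fun a _ => by rw [hcast])
  have hC : cohenTotient k (p ^ v) = p ^ (v * k) - p ^ ((v - 1) * k) := by
    rw [cohenTotient, hFeq, hφ]
  have hM : Msk s k (p ^ v) =
      (if (p : ℤ) ^ k ∣ s then 1 else v + 1) * (p ^ (v * k) - p ^ ((v - 1) * k)) := by
    by_cases hs : (p : ℤ) ^ k ∣ s
    · rw [if_pos hs, one_mul, hMsk]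
      have h1 : ∀ a ∈ F, kgcd k ((a : ℤ) - s) ((p : ℤ) ^ (v * k)) = 1 := by
        intro a ha
        rw [kgcd_eq_one_iff_s15 k hk p hp v hv]
        intro hd
        rw [hFdef, Finset.mem_filter] at ha
        exact ha.2 (by simpa using dvd_add hd hs)
      rw [Finset.sum_congr rfl h1, Finset.sum_const, smul_eq_mul, mul_one, hφ]
    · rw [if_neg hs, hMsk]
      calc ∑ a ∈ F, kgcd k ((a : ℤ) - s) ((p : ℤ) ^ (v * k))
          = ∑ a ∈ F, ∑ j ∈ Finset.range (v + 1),
              (if (p : ℤ) ^ (j * k) ∣ ((a : ℤ) - s) then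
                (if j = 0 then 1 else p ^ (j * k) - p ^ ((j - 1) * k)) else 0) :=
            Finset.sum_congr rfl (fun a _ => kgcd_expand k hk p hp v _)
        _ = ∑ j ∈ Finset.range (v + 1), ∑ a ∈ F,
              (if (p : ℤ) ^ (j * k) ∣ ((a : ℤ) - s) then
                (if j = 0 then 1 else p ^ (j * k) - p ^ ((j - 1) * k)) else 0) :=
            Finset.sum_comm
        _ = ∑ _j ∈ Finset.range (v + 1), (p ^ (v * k) - p ^ ((v - 1) * k)) := by
            apply Finset.sum_congr rfl
            intro j hj
            rw [Finset.mem_range] at hj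
            rcases Nat.eq_zero_or_pos j with h0 | hjpos
            · subst h0
              have h2 : ∀ a ∈ F, (if (p : ℤ) ^ (0 * k) ∣ ((a : ℤ) - s) then
                  (if (0 : ℕ) = 0 then 1 else p ^ (0 * k) - p ^ ((0 - 1) * k)) else 0) = 1 :=
                fun a _ => by simp
              rw [Finset.sum_congr rfl h2, Finset.sum_const, smul_eq_mul, mul_one, hφ]
            · have hcondimp : ∀ a : ℕ, (p : ℤ) ^ (j * k) ∣ ((a : ℤ) - s) →
                  ¬ (p : ℤ) ^ k ∣ (a : ℤ) := by
                intro a hdv hpa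
                apply hs
                have h3 : (p : ℤ) ^ k ∣ ((a : ℤ) - s) :=
                  dvd_trans (pow_dvd_pow _ (Nat.le_mul_of_pos_left k hjpos)) hdv
                simpa using dvd_sub hpa h3
              rw [← Finset.sum_filter, Finset.sum_const, smul_eq_mul]
              have hcardQ : (F.filter (fun a : ℕ => (p : ℤ) ^ (j * k) ∣ ((a : ℤ) - s))).card =
                  p ^ ((v - j) * k) := by
                have heq2 : F.filter (fun a : ℕ => (p : ℤ) ^ (j * k) ∣ ((a : ℤ) - s)) =
                    (Finset.Ioc 0 (p ^ (v * k))).filter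
                      (fun a : ℕ => ((p ^ (j * k) : ℕ) : ℤ) ∣ ((a : ℤ) - s)) := by
                  rw [hFdef, Finset.filter_filter]
                  apply Finset.filter_congr
                  intro a _
                  push_cast
                  constructor
                  · rintro ⟨-, h⟩; exact h
                  · intro h; exact ⟨hcondimp a h, h⟩
                rw [heq2, count_cong _ _ (pow_pos hp.pos _)
                  (pow_dvd_pow p (Nat.mul_le_mul_right k (by omega : j ≤ v))) s,
                  Nat.pow_div (Nat.mul_le_mul_right k (by omega : j ≤ v)) hp.pos, ← Nat.sub_mul]
              rw [hcardQ, if_neg (by omega : ¬ j = 0), Nat.mul_sub]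
              have e1 : p ^ ((v - j) * k) * p ^ (j * k) = p ^ (v * k) := by
                rw [← pow_add, ← Nat.add_mul]
                congr 2
                omega
              have e2 : p ^ ((v - j) * k) * p ^ ((j - 1) * k) = p ^ ((v - 1) * k) := by
                rw [← pow_add, ← Nat.add_mul]
                congr 2
                omega
              rw [e1, e2]
        _ = (v + 1) * (p ^ (v * k) - p ^ ((v - 1) * k)) := by
            rw [Finset.sum_const, Finset.card_range, smul_eq_mul]
  refine ⟨?_, ?_, ?_⟩
  · rw [hM, hC, dskPrimePow]
  · intro hs; rw [hM, if_pos hs, one_mul]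
  · intro hs; rw [hM, if_neg hs]
end
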